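/- arXiv:math/0508533 — 3 statements merged into one kernel-verified Lean document; each statement's English description precedes it below -/
import Mathlib

section
/- For all sufficiently large Δ>0 (with the contour L and the function φ constructed for this Δ): (1) for every y=(y₂,y₃)∈ℤ² with y₂>0 and y₃>0, Σ_z s_{yz}·(φ(z)−φ(y)) = (λ₂−λ₁)/u₂ + (λ₃−λ₁)/u₃, a value independent of y; (2) there exist constants C>0 and γ>0 such that for every y∈ℤ² with y₂>0, y₃>0 and φ(y)>C, Σ_z r_{yz}·(φ(z)−φ(y)) ≤ −γ·φ(y). -/
noncomputable section

/-- The quadratic form `e(y₂,y₃) = a·y₂² + b·(y₂−y₃)²` defining the ellipse. -/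
def eF (a b : ℝ) (y : ℝ × ℝ) : ℝ := a * y.1 ^ 2 + b * (y.1 - y.2) ^ 2

/-- The gradient of `eF`. -/
def gradE (a b : ℝ) (y : ℝ × ℝ) : ℝ × ℝ :=
  (2 * a * y.1 + 2 * b * (y.1 - y.2), -(2 * b * (y.1 - y.2)))

/-- Euclidean inner product on `ℝ × ℝ`. -/
def dotp (u v : ℝ × ℝ) : ℝ := u.1 * v.1 + u.2 * v.2

/-- Euclidean norm on `ℝ × ℝ`. -/
def enorm2 (v : ℝ × ℝ) : ℝ := Real.sqrt (v.1 ^ 2 + v.2 ^ 2)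

/-- `T` is a point of the ellipse in the open quadrant `{y₂<0, y₃<0}` where the
gradient of `e` is a positive multiple of `(−Δ, 1)`. -/
def IsT3 (a b Δ : ℝ) (T : ℝ × ℝ) : Prop :=
  eF a b T = 1 ∧ T.1 < 0 ∧ T.2 < 0 ∧ ∃ c > 0, gradE a b T = c • ((-Δ, 1) : ℝ × ℝ)

/-- `T` is a point of the ellipse with `y₃ < 0` where the gradient of `e`
is a positive multiple of `(1, −Δ)`. -/
def IsT2 (a b Δ : ℝ) (T : ℝ × ℝ) : Prop :=
  eF a b T = 1 ∧ T.2 < 0 ∧ ∃ c > 0, gradE a b T = c • ((1, -Δ) : ℝ × ℝ)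

/-- The configuration of the tangency points `T₂, T₃` and of the intercepts
`K₂ = (u₂,0)`, `K₃ = (0,u₃)` of the corresponding tangent lines with the axes. -/
def GoodConfig (a b Δ u₂ u₃ : ℝ) (T₂ T₃ : ℝ × ℝ) : Prop :=
  IsT2 a b Δ T₂ ∧ IsT3 a b Δ T₃ ∧ 0 < u₂ ∧ 0 < u₃ ∧
  dotp (gradE a b T₂) (((u₂, 0) : ℝ × ℝ) - T₂) = 0 ∧
  dotp (gradE a b T₃) (((0, u₃) : ℝ × ℝ) - T₃) = 0

/-- The closed arc of the ellipse from `T₂` to `T₃` passing through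
`(−a^{−1/2}, −a^{−1/2})`: the points of the ellipse whose outward normal direction
lies in the closed convex cone spanned by `(1, −Δ)` (normal at `T₂`) and
`(−Δ, 1)` (normal at `T₃`). -/
def arcE (a b Δ : ℝ) : Set (ℝ × ℝ) :=
  {y | eF a b y = 1 ∧ ∃ c₂ c₃ : ℝ, 0 ≤ c₂ ∧ 0 ≤ c₃ ∧
    gradE a b y = c₂ • ((1, -Δ) : ℝ × ℝ) + c₃ • ((-Δ, 1) : ℝ × ℝ)}

/-- The closed contour `L`: segment `K₃K₂`, segment `K₂T₂`, the arc of the ellipse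
from `T₂` to `T₃` through `(−a^{−1/2},−a^{−1/2})`, and segment `T₃K₃`. -/
def contourL (a b Δ u₂ u₃ : ℝ) (T₂ T₃ : ℝ × ℝ) : Set (ℝ × ℝ) :=
  segment ℝ ((0, u₃) : ℝ × ℝ) ((u₂, 0) : ℝ × ℝ) ∪
    segment ℝ ((u₂, 0) : ℝ × ℝ) T₂ ∪ arcE a b Δ ∪
    segment ℝ T₃ ((0, u₃) : ℝ × ℝ)

/-- `φ` is the homogeneous functional associated with the contour `L`:
`φ(0) = 0` and, for `y ≠ 0`, `φ(y)` is positive with `y/φ(y) ∈ L`. -/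
def IsPhi (L : Set (ℝ × ℝ)) (φ : ℝ × ℝ → ℝ) : Prop :=
  φ 0 = 0 ∧ ∀ y : ℝ × ℝ, y ≠ 0 → 0 < φ y ∧ (φ y)⁻¹ • y ∈ L

/-- `n` is the outward unit normal field of the contour `L` (defined except at
`K₂` and `K₃`): on the elliptic arc it is `∇e(y)/‖∇e(y)‖`, and it is constant on
each of the three straight pieces, equal to `n(T₂)` on `(K₂,T₂]`, to `n(T₃)` on
`[T₃,K₃)`, and to the normalized `(u₂⁻¹, u₃⁻¹)` on `(K₃,K₂)`. -/
def IsN (a b Δ u₂ u₃ : ℝ) (T₂ T₃ : ℝ × ℝ) (n : ℝ × ℝ → ℝ × ℝ) : Prop :=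
  (∀ y ∈ arcE a b Δ, n y = (enorm2 (gradE a b y))⁻¹ • gradE a b y) ∧
  (∀ y ∈ segment ℝ ((u₂, 0) : ℝ × ℝ) T₂, y ≠ ((u₂, 0) : ℝ × ℝ) → n y = n T₂) ∧
  (∀ y ∈ segment ℝ T₃ ((0, u₃) : ℝ × ℝ), y ≠ ((0, u₃) : ℝ × ℝ) → n y = n T₃) ∧
  (∀ y ∈ segment ℝ ((0, u₃) : ℝ × ℝ) ((u₂, 0) : ℝ × ℝ),
    y ≠ ((0, u₃) : ℝ × ℝ) → y ≠ ((u₂, 0) : ℝ × ℝ) →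
    n y = (enorm2 ((u₂⁻¹, u₃⁻¹) : ℝ × ℝ))⁻¹ • ((u₂⁻¹, u₃⁻¹) : ℝ × ℝ))

/-- Coercion of an integer lattice point to `ℝ × ℝ`. -/
def iv (y : ℤ × ℤ) : ℝ × ℝ := ((y.1 : ℝ), (y.2 : ℝ))

/-- Free-dynamics part `s_{yz}` of the transition probabilities of the embedded
relative-coordinate chain of the three-processor cascade model. -/
def sker (l1 l2 l3 : ℝ) (y z : ℤ × ℤ) : ℝ :=
  (if z = y + (1, 0) then l2 else 0) + (if z = y + (0, 1) then l3 else 0) +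
    (if z = y - (1, 1) then l1 else 0)

/-- Rollback part `r_{yz}` of the transition probabilities of the embedded
relative-coordinate chain of the three-processor cascade model
(`b2 = λ₂/(λ₂+β₁₂)`). -/
def rker (b12 b23 b2 : ℝ) (y z : ℤ × ℤ) : ℝ :=
  (if 0 < y.1 ∧ y.2 ≤ 0 ∧ z = (0, y.2) then b12 else 0) +
  (if y.1 < y.2 ∧ z = (y.1, y.1) then b23 else 0) +
  (if 0 < y.2 ∧ y.2 ≤ y.1 ∧ z.1 = 0 ∧ 0 ≤ z.2 ∧ z.2 < y.2 then
      b12 * (1 - b2) ^ z.2.toNat * b2 else 0) +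
  (if 0 < y.2 ∧ y.2 ≤ y.1 ∧ z = (0, y.2) then b12 * (1 - b2) ^ y.2.toNat else 0) +
  (if 0 < y.1 ∧ y.1 < y.2 ∧ z.1 = 0 ∧ 0 ≤ z.2 ∧ z.2 ≤ y.1 then
      b12 * (1 - b2) ^ z.2.toNat * b2 else 0) +
  (if 0 < y.1 ∧ y.1 < y.2 ∧ z = (0, y.2) then b12 * (1 - b2) ^ (y.1.toNat + 1) else 0)

/-- Total transition probability `p_{yz}` of the embedded relative-coordinate chain:
for `z ≠ y` it is `s_{yz} + r_{yz}`, and the remaining probability mass is assigned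
to staying at `y`. -/
def pker (l1 l2 l3 b12 b23 b2 : ℝ) (y z : ℤ × ℤ) : ℝ :=
  sker l1 l2 l3 y z + rker b12 b23 b2 y z +
    (if z = y then 1 - ∑' w : ℤ × ℤ, (sker l1 l2 l3 y w + rker b12 b23 b2 y w) else 0)

lemma onL_quadrant (a b Δ u₂ u₃ : ℝ) (T₂ T₃ : ℝ × ℝ) (ha : 0 < a) (hbb : 0 < b)
    (hΔ : 1 < Δ) (hg : GoodConfig a b Δ u₂ u₃ T₂ T₃) :
    ∀ q ∈ contourL a b Δ u₂ u₃ T₂ T₃, 0 ≤ q.1 → 0 ≤ q.2 →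
      q.1 / u₂ + q.2 / u₃ = 1 := by
  obtain ⟨hT2, hT3, hu₂, hu₃, -, -⟩ := hg
  intro q hq hq1 hq2
  rcases hq with ((hq | hq) | hq) | hq
  · -- segment (0,u₃) (u₂,0)
    obtain ⟨α, β, hα, hβ, hαβ, rfl⟩ := hq
    simp only [Prod.smul_mk, smul_eq_mul, Prod.mk_add_mk, Prod.fst_add, Prod.snd_add] at *
    field_simp
    linear_combination u₂ * u₃ * hαβ
  · -- segment (u₂,0) T₂
    obtain ⟨α, β, hα, hβ, hαβ, rfl⟩ := hq
    simp only [Prod.smul_mk, smul_eq_mul, Prod.mk_add_mk, Prod.fst_add, Prod.snd_add,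
      Prod.smul_snd, Prod.smul_fst] at *
    have hβ0 : β = 0 := by nlinarith [hT2.2.1]
    subst hβ0
    have : α = 1 := by linarith
    subst this
    field_simp
    ring
  · -- arc
    obtain ⟨he, c₂, c₃, hc₂, hc₃, hgrad⟩ := hq
    have h1 : (gradE a b q).1 = c₂ * 1 + c₃ * (-Δ) := by rw [hgrad]; simp
    have h2 : (gradE a b q).2 = c₂ * (-Δ) + c₃ * 1 := by rw [hgrad]; simp
    simp only [gradE] at h1 h2
    have hsum : 2 * a * q.1 = (1 - Δ) * (c₂ + c₃) := by linarith
    have hc0 : c₂ + c₃ = 0 := by nlinarith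
    have hc₂0 : c₂ = 0 := by linarith
    have hc₃0 : c₃ = 0 := by linarith
    have hq10 : q.1 = 0 := by nlinarith
    have hq20 : q.1 - q.2 = 0 := by
      rw [hc₂0, hc₃0] at h2; nlinarith
    exfalso
    simp only [eF, hq10] at he
    have h3 : q.2 = 0 := by linarith
    rw [h3] at he
    norm_num at he
  · -- segment T₃ (0,u₃)
    obtain ⟨α, β, hα, hβ, hαβ, rfl⟩ := hq
    simp only [Prod.smul_mk, smul_eq_mul, Prod.mk_add_mk, Prod.fst_add, Prod.snd_add,
      Prod.smul_snd, Prod.smul_fst] at *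
    have hα0 : α = 0 := by nlinarith [hT3.2.1]
    subst hα0
    have : β = 1 := by linarith
    subst this
    field_simp
    ring

lemma philin (a b Δ u₂ u₃ : ℝ) (T₂ T₃ : ℝ × ℝ) (ha : 0 < a) (hbb : 0 < b)
    (hΔ : 1 < Δ) (hg : GoodConfig a b Δ u₂ u₃ T₂ T₃)
    (φ : ℝ × ℝ → ℝ) (hφ : IsPhi (contourL a b Δ u₂ u₃ T₂ T₃) φ) :
    ∀ p : ℝ × ℝ, 0 ≤ p.1 → 0 ≤ p.2 → φ p = p.1 / u₂ + p.2 / u₃ := by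
  have hu₂ := hg.2.2.1
  have hu₃ := hg.2.2.2.1
  intro p hp1 hp2
  rcases eq_or_ne p 0 with rfl | hne
  · simp [hφ.1]
  · obtain ⟨hpos, hmem⟩ := hφ.2 p hne
    have h1 : (0:ℝ) ≤ ((φ p)⁻¹ • p).1 := by
      simp only [Prod.smul_fst, smul_eq_mul]; positivity
    have h2 : (0:ℝ) ≤ ((φ p)⁻¹ • p).2 := by
      simp only [Prod.smul_snd, smul_eq_mul]; positivity
    have h := onL_quadrant a b Δ u₂ u₃ T₂ T₃ ha hbb hΔ hg _ hmem h1 h2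
    simp only [Prod.smul_fst, Prod.smul_snd, smul_eq_mul] at h
    field_simp at h
    have hc := mul_left_cancel₀ (ne_of_gt hpos)
      (show φ p * (p.1 * u₃ + p.2 * u₂) = φ p * (φ p * (u₂ * u₃)) by linear_combination φ p * h)
    field_simp
    linarith [hc]

lemma ite_pt (c : ℝ) (g : ℤ × ℤ → ℝ) (w z : ℤ × ℤ) :
    (if z = w then c else 0) * g z = if z = w then c * g w else 0 := by
  split_ifs with h
  · rw [h]
  · simp


/-- Lemma about the positive quadrant `E₁ = {y₂ > 0, y₃ > 0}`: for all
sufficiently large `Δ`: (1) for every `y ∈ ℤ²` with `y₂ > 0`, `y₃ > 0`,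
`Σ_z s_{yz}(φ(z) − φ(y)) = (λ₂−λ₁)/u₂ + (λ₃−λ₁)/u₃`, independent of `y`;
(2) there are `C > 0`, `γ > 0` such that for every such `y` with `φ(y) > C`,
`Σ_z r_{yz}(φ(z) − φ(y)) ≤ −γ·φ(y)`. -/
theorem stmt12 (l1 l2 l3 b12 b23 : ℝ)
    (hl1 : 0 < l1) (hl2 : 0 < l2) (hl3 : 0 < l3) (hb12 : 0 < b12) (hb23 : 0 < b23)
    (hsum : l1 + l2 + l3 + b12 + b23 = 1)
    (a b : ℝ) (ha : 0 < a) (hb : 0 < b) :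
    ∃ Δ₀ > (0 : ℝ), ∀ Δ > Δ₀, ∀ u₂ u₃ : ℝ, ∀ T₂ T₃ : ℝ × ℝ,
      GoodConfig a b Δ u₂ u₃ T₂ T₃ →
      ∀ φ : ℝ × ℝ → ℝ, IsPhi (contourL a b Δ u₂ u₃ T₂ T₃) φ →
      (∀ y : ℤ × ℤ, 0 < y.1 → 0 < y.2 →
        (∑' z : ℤ × ℤ, sker l1 l2 l3 y z * (φ (iv z) - φ (iv y)))
          = (l2 - l1) / u₂ + (l3 - l1) / u₃) ∧
      (∃ C > (0 : ℝ), ∃ γ > (0 : ℝ), ∀ y : ℤ × ℤ, 0 < y.1 → 0 < y.2 → C < φ (iv y) →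
        (∑' z : ℤ × ℤ, rker b12 b23 (l2 / (l2 + b12)) y z * (φ (iv z) - φ (iv y)))
          ≤ -(γ * φ (iv y))) := by
  refine ⟨1, one_pos, ?_⟩
  intro Δ hΔ u₂ u₃ T₂ T₃ hg φ hφ
  have hu₂ := hg.2.2.1
  have hu₃ := hg.2.2.2.1
  have hlin := philin a b Δ u₂ u₃ T₂ T₃ ha hb hΔ hg φ hφ
  have hZ : ∀ z : ℤ × ℤ, 0 ≤ z.1 → 0 ≤ z.2 →
      φ (iv z) = (z.1 : ℝ) / u₂ + (z.2 : ℝ) / u₃ := by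
    intro z h1 h2
    exact hlin (iv z) (by simp only [iv]; exact_mod_cast h1) (by simp only [iv]; exact_mod_cast h2)
  constructor
  · -- part 1
    intro y hy1 hy2
    set g : ℤ × ℤ → ℝ := fun z => φ (iv z) - φ (iv y) with hgdef
    have e1 : (fun z : ℤ × ℤ => sker l1 l2 l3 y z * g z) = fun z =>
        ((if z = y + (1, 0) then l2 * g (y + (1, 0)) else 0) +
          (if z = y + (0, 1) then l3 * g (y + (0, 1)) else 0)) +
          (if z = y - (1, 1) then l1 * g (y - (1, 1)) else 0) := by
      funext z
      simp only [sker, add_mul, ite_pt]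
    have S : ∀ (w : ℤ × ℤ) (c : ℝ), Summable fun z : ℤ × ℤ => if z = w then c else 0 :=
      fun w c => (hasSum_ite_eq w c).summable
    calc (∑' z : ℤ × ℤ, sker l1 l2 l3 y z * g z)
        = (∑' z : ℤ × ℤ, (((if z = y + (1, 0) then l2 * g (y + (1, 0)) else 0) +
            (if z = y + (0, 1) then l3 * g (y + (0, 1)) else 0)) +
            (if z = y - (1, 1) then l1 * g (y - (1, 1)) else 0))) := by rw [e1]
      _ = l2 * g (y + (1, 0)) + l3 * g (y + (0, 1)) + l1 * g (y - (1, 1)) := by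
          rw [Summable.tsum_add ((S _ _).add (S _ _)) (S _ _), Summable.tsum_add (S _ _) (S _ _),
            tsum_ite_eq, tsum_ite_eq, tsum_ite_eq]
      _ = (l2 - l1) / u₂ + (l3 - l1) / u₃ := by
          have v0 := hZ y hy1.le hy2.le
          have v1 := hZ (y + (1, 0)) (by simp; omega) (by simp; omega)
          have v2 := hZ (y + (0, 1)) (by simp; omega) (by simp; omega)
          have v3 := hZ (y - (1, 1)) (by simp; omega) (by simp; omega)
          simp only [hgdef, v0, v1, v2, v3, Prod.fst_add, Prod.snd_add, Prod.fst_sub,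
            Prod.snd_sub]
          push_cast
          field_simp
          ring
  · -- part 2
    set b2 : ℝ := l2 / (l2 + b12) with hb2def
    have hden : 0 < l2 + b12 := by linarith
    have hb2 : 0 < b2 := by positivity
    have h1b2 : 0 < 1 - b2 := by
      rw [hb2def]
      rw [sub_pos, div_lt_one hden]
      linarith
    refine ⟨1, one_pos, b12 * b2, by positivity, ?_⟩
    intro y hy1 hy2 hC
    set f : ℤ × ℤ → ℝ := fun z => rker b12 b23 b2 y z * (φ (iv z) - φ (iv y)) with hfdef
    have hrpos : ∀ z, 0 ≤ rker b12 b23 b2 y z := by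
      intro z
      unfold rker
      have p1 : (0:ℝ) ≤ b12 * (1 - b2) ^ z.2.toNat * b2 :=
        mul_nonneg (mul_nonneg hb12.le (pow_nonneg h1b2.le _)) hb2.le
      have p2 : (0:ℝ) ≤ b12 * (1 - b2) ^ y.2.toNat :=
        mul_nonneg hb12.le (pow_nonneg h1b2.le _)
      have p3 : (0:ℝ) ≤ b12 * (1 - b2) ^ (y.1.toNat + 1) :=
        mul_nonneg hb12.le (pow_nonneg h1b2.le _)
      refine add_nonneg (add_nonneg (add_nonneg (add_nonneg (add_nonneg ?_ ?_) ?_) ?_) ?_) ?_ <;>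
        split_ifs <;>
        first
        | exact le_refl 0
        | exact hb12.le
        | exact hb23.le
        | exact p1
        | exact p2
        | exact p3
    have hsupp : ∀ z : ℤ × ℤ, rker b12 b23 b2 y z ≠ 0 →
        (z.1 = 0 ∧ 0 ≤ z.2 ∧ z.2 ≤ y.2) ∨ (z = (y.1, y.1) ∧ y.1 ≤ y.2) := by
      intro z hz
      by_contra hc
      push_neg at hc
      obtain ⟨hA, hB⟩ := hc
      apply hz
      have n1 : ¬(0 < y.1 ∧ y.2 ≤ 0 ∧ z = (0, y.2)) := by rintro ⟨-, h, -⟩; omega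
      have n2 : ¬(y.1 < y.2 ∧ z = (y.1, y.1)) := by
        rintro ⟨h12, h2⟩; exact absurd h12 (not_lt.2 (hB h2).le)
      have n3 : ¬(0 < y.2 ∧ y.2 ≤ y.1 ∧ z.1 = 0 ∧ 0 ≤ z.2 ∧ z.2 < y.2) := by
        rintro ⟨-, -, hz1, hz2, hz3⟩; have := hA hz1 hz2; omega
      have n4 : ¬(0 < y.2 ∧ y.2 ≤ y.1 ∧ z = (0, y.2)) := by
        rintro ⟨-, -, rfl⟩; have := hA rfl (le_of_lt hy2); omega
      have n5 : ¬(0 < y.1 ∧ y.1 < y.2 ∧ z.1 = 0 ∧ 0 ≤ z.2 ∧ z.2 ≤ y.1) := by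
        rintro ⟨-, h12, hz1, hz2, hz3⟩; have := hA hz1 hz2; omega
      have n6 : ¬(0 < y.1 ∧ y.1 < y.2 ∧ z = (0, y.2)) := by
        rintro ⟨-, -, rfl⟩; have := hA rfl (le_of_lt hy2); omega
      simp only [rker, n1, n2, n3, n4, n5, n6, if_false]
      norm_num
    have hle : ∀ z : ℤ × ℤ, rker b12 b23 b2 y z ≠ 0 → φ (iv z) ≤ φ (iv y) := by
      intro z hz
      have hu₂' := hu₂.le
      have hu₃' := hu₃.le
      rcases hsupp z hz with ⟨h0, h2, h3⟩ | ⟨rfl, h⟩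
      · rw [hZ z (by omega) h2, hZ y hy1.le hy2.le]
        have c1 : (z.1 : ℝ) ≤ (y.1 : ℝ) := by exact_mod_cast by omega
        have c2 : (z.2 : ℝ) ≤ (y.2 : ℝ) := by exact_mod_cast h3
        gcongr
      · rw [hZ ((y.1, y.1)) hy1.le hy1.le, hZ y hy1.le hy2.le]
        have c2 : (y.1 : ℝ) ≤ (y.2 : ℝ) := by exact_mod_cast h
        gcongr
    have hfnonpos : ∀ z, f z ≤ 0 := by
      intro z
      rcases eq_or_ne (rker b12 b23 b2 y z) 0 with h | h
      · simp [hfdef, h]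
      · exact mul_nonpos_of_nonneg_of_nonpos (hrpos z) (sub_nonpos.2 (hle z h))
    have hsumf : Summable f := by
      apply summable_of_ne_finset_zero
        (s := (({0} : Finset ℤ) ×ˢ Finset.Icc 0 y.2) ∪ {(y.1, y.1)})
      intro z hzs
      by_contra hf
      apply hzs
      have hr : rker b12 b23 b2 y z ≠ 0 := by
        intro h; exact hf (by simp [hfdef, h])
      rcases hsupp z hr with ⟨h0, h2, h3⟩ | ⟨rfl, -⟩
      · exact Finset.mem_union_left _ (by
          rw [Finset.mem_product]
          exact ⟨by simp [h0], Finset.mem_Icc.2 ⟨h2, h3⟩⟩)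
      · exact Finset.mem_union_right _ (Finset.mem_singleton_self _)
    have hval : rker b12 b23 b2 y ((0 : ℤ), (0 : ℤ)) = b12 * b2 := by
      rcases le_or_gt y.2 y.1 with h | h
      · have n1 : ¬(0 < y.1 ∧ y.2 ≤ 0 ∧ ((0:ℤ),(0:ℤ)) = (0, y.2)) := by
          rintro ⟨-, h2, -⟩; omega
        have n2 : ¬(y.1 < y.2 ∧ ((0:ℤ),(0:ℤ)) = (y.1, y.1)) := fun ⟨h12, _⟩ => absurd h12 (not_lt.2 h)
        have p3 : 0 < y.2 ∧ y.2 ≤ y.1 ∧ ((0:ℤ),(0:ℤ)).1 = 0 ∧ 0 ≤ ((0:ℤ),(0:ℤ)).2 ∧ ((0:ℤ),(0:ℤ)).2 < y.2 :=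
          ⟨hy2, h, rfl, le_refl 0, hy2⟩
        have n4 : ¬(0 < y.2 ∧ y.2 ≤ y.1 ∧ ((0:ℤ),(0:ℤ)) = (0, y.2)) := by
          rintro ⟨-, -, hq⟩
          rw [Prod.mk.injEq] at hq
          omega
        have n5 : ¬(0 < y.1 ∧ y.1 < y.2 ∧ ((0:ℤ),(0:ℤ)).1 = 0 ∧ 0 ≤ ((0:ℤ),(0:ℤ)).2 ∧ ((0:ℤ),(0:ℤ)).2 ≤ y.1) := by
          rintro ⟨-, h12, -⟩; omega
        have n6 : ¬(0 < y.1 ∧ y.1 < y.2 ∧ ((0:ℤ),(0:ℤ)) = (0, y.2)) := by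
          rintro ⟨-, h12, -⟩; omega
        simp only [rker, n1, n2, n4, n5, n6, if_false, if_pos p3]
        norm_num
        rw [if_pos (⟨hy2, h, hy2⟩ : 0 < y.2 ∧ y.2 ≤ y.1 ∧ 0 < y.2),
          if_neg (by omega : ¬(0 < y.1 ∧ y.1 < y.2 ∧ (0:ℤ) ≤ y.1))]
        ring
      · have n1 : ¬(0 < y.1 ∧ y.2 ≤ 0 ∧ ((0:ℤ),(0:ℤ)) = (0, y.2)) := by
          rintro ⟨-, h2, -⟩; omega
        have n2 : ¬(y.1 < y.2 ∧ ((0:ℤ),(0:ℤ)) = (y.1, y.1)) := by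
          rintro ⟨-, hq⟩
          rw [Prod.mk.injEq] at hq
          omega
        have n3 : ¬(0 < y.2 ∧ y.2 ≤ y.1 ∧ ((0:ℤ),(0:ℤ)).1 = 0 ∧ 0 ≤ ((0:ℤ),(0:ℤ)).2 ∧ ((0:ℤ),(0:ℤ)).2 < y.2) := by
          rintro ⟨-, h21, -⟩; omega
        have n4 : ¬(0 < y.2 ∧ y.2 ≤ y.1 ∧ ((0:ℤ),(0:ℤ)) = (0, y.2)) := by
          rintro ⟨-, h21, -⟩; omega
        have p5 : 0 < y.1 ∧ y.1 < y.2 ∧ ((0:ℤ),(0:ℤ)).1 = 0 ∧ 0 ≤ ((0:ℤ),(0:ℤ)).2 ∧ ((0:ℤ),(0:ℤ)).2 ≤ y.1 :=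
          ⟨hy1, h, rfl, le_refl 0, hy1.le⟩
        have n6 : ¬(0 < y.1 ∧ y.1 < y.2 ∧ ((0:ℤ),(0:ℤ)) = (0, y.2)) := by
          rintro ⟨-, -, hq⟩
          rw [Prod.mk.injEq] at hq
          omega
        simp only [rker, n1, n2, n3, n4, n6, if_false, if_pos p5]
        norm_num
        rw [if_neg (by omega : ¬(0 < y.2 ∧ y.2 ≤ y.1 ∧ (0:ℤ) < y.2)),
          if_pos (⟨hy1, h, hy1.le⟩ : 0 < y.1 ∧ y.1 < y.2 ∧ (0:ℤ) ≤ y.1)]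
        ring
    have hφ0 : φ (iv ((0 : ℤ), (0 : ℤ))) = 0 := by
      rw [hZ ((0 : ℤ), (0 : ℤ)) (le_refl 0) (le_refl 0)]
      norm_num
    have hf00 : f ((0 : ℤ), (0 : ℤ)) = -(b12 * b2 * φ (iv y)) := by
      simp only [hfdef, hval, hφ0]
      ring
    have key : (∑' z : ℤ × ℤ, f z) ≤ f ((0 : ℤ), (0 : ℤ)) := by
      have h₁ := Summable.sum_le_tsum ({((0 : ℤ), (0 : ℤ))} : Finset (ℤ × ℤ))
        (fun i _ => neg_nonneg.2 (hfnonpos i)) hsumf.neg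
      rw [Finset.sum_singleton, tsum_neg] at h₁
      linarith
    rw [show (∑' z : ℤ × ℤ, rker b12 b23 b2 y z * (φ (iv z) - φ (iv y))) = ∑' z, f z from rfl]
    rw [hf00] at key
    exact key
end
end

section
/- For all sufficiently large Δ>0 (with the contour L and the function φ constructed for this Δ) there exist constants C>0 and γ>0 such that for every y∈ℤ² lying on one of the open positive half-axes (i.e. y=(0,y₃) with y₃>0, or y=(y₂,0) with y₂>0) with φ(y)>C: Σ_z r_{yz}·(φ(z)−φ(y)) ≤ −γ·φ(y); moreover, Σ_z s_{yz}·(φ(z)−φ(y)) takes the same value for all such y on the half-axis {y₂=0, y₃>0} with φ(y)>C, and likewise takes the same value for all such y on the half-axis {y₂>0, y₃=0} with φ(y)>C. -/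
noncomputable section

section Aux

variable {a b Δ u₂ u₃ : ℝ} {T₂ T₃ : ℝ × ℝ}

lemma arc_neg (ha : 0 < a) (hb : 0 < b) (hΔ : 1 + a / b < Δ) :
    ∀ y ∈ arcE a b Δ, y.1 < 0 ∧ y.2 < 0 := by
  rintro y ⟨he, c₂, c₃, hc₂, hc₃, hg⟩
  have h1 : 2 * a * y.1 + 2 * b * (y.1 - y.2) = c₂ - c₃ * Δ := by
    have := congrArg Prod.fst hg
    simp [gradE, Prod.smul_fst, smul_eq_mul, mul_comm] at this; linarith
  have h2 : -(2 * b * (y.1 - y.2)) = -(c₂ * Δ) + c₃ := by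
    have := congrArg Prod.snd hg
    simpa [gradE, Prod.smul_snd, smul_eq_mul, mul_comm] using this
  have hΔ1 : 1 < Δ := by
    have : 0 < a / b := div_pos ha hb
    linarith
  have hcs : 0 < c₂ + c₃ := by
    rcases lt_or_eq_of_le (by positivity : (0:ℝ) ≤ c₂ + c₃) with h | h
    · exact h
    · exfalso
      have hc2 : c₂ = 0 := by linarith
      have hc3 : c₃ = 0 := by linarith
      rw [hc2, hc3] at h1 h2
      have hy1 : y.1 = 0 := by nlinarith
      have hy12 : y.1 - y.2 = 0 := by nlinarith
      have he' : a * y.1 ^ 2 + b * (y.1 - y.2) ^ 2 = 1 := he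
      rw [hy12, hy1] at he'
      norm_num at he' 
  have hp : 2 * a * y.1 = (c₂ + c₃) * (1 - Δ) := by linarith
  constructor
  · nlinarith [mul_pos hcs (by linarith : (0:ℝ) < Δ - 1)]
  · -- 2a * 2b * y.2 = 2b*(c₂+c₃)*(1-Δ) + 2a*(c₃ - c₂*Δ) < 0
    have key : 2 * a * (2 * b * y.2) = 2 * b * ((c₂ + c₃) * (1 - Δ)) + 2 * a * (c₃ - c₂ * Δ) := by
      nlinarith [h1, h2, hp]
    have hub : c₃ - c₂ * Δ ≤ c₂ + c₃ := by nlinarith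
    have hneg : 2 * b * ((c₂ + c₃) * (1 - Δ)) + 2 * a * (c₂ + c₃) < 0 := by
      have hba : a < b * (Δ - 1) := by
        have h := (div_lt_iff₀ hb).mp (by linarith : a / b < Δ - 1)
        linarith
      nlinarith [mul_pos hcs (by linarith : (0:ℝ) < b * (Δ - 1) - a)]
    nlinarith [key, hneg, mul_le_mul_of_nonneg_left hub (by positivity : (0:ℝ) ≤ 2 * a),
      mul_pos ha hb]

lemma u2_eq (hcfg : GoodConfig a b Δ u₂ u₃ T₂ T₃) : T₂.1 - Δ * T₂.2 = u₂ := by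
  obtain ⟨⟨_, _, c, hc, hg⟩, _, _, _, hd2, _⟩ := hcfg
  rw [hg] at hd2
  simp only [dotp, Prod.smul_fst, Prod.smul_snd, Prod.fst_sub, Prod.snd_sub] at hd2
  simp only [nsmul_eq_mul] at hd2
  have hcne : ((c : ℝ)) ≠ 0 := Nat.cast_ne_zero.mpr hc.ne'
  have key : (c : ℝ) * (u₂ - T₂.1 + Δ * T₂.2) = 0 := by linear_combination hd2
  have := (mul_eq_zero.mp key).resolve_left hcne
  linarith

lemma u3_eq (hcfg : GoodConfig a b Δ u₂ u₃ T₂ T₃) : T₃.2 - Δ * T₃.1 = u₃ := by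
  obtain ⟨_, ⟨_, _, _, c, hc, hg⟩, _, _, _, hd3⟩ := hcfg
  rw [hg] at hd3
  simp only [dotp, Prod.smul_fst, Prod.smul_snd, Prod.fst_sub, Prod.snd_sub] at hd3
  simp only [nsmul_eq_mul] at hd3
  have hcne : ((c : ℝ)) ≠ 0 := Nat.cast_ne_zero.mpr hc.ne'
  have key : (c : ℝ) * (u₃ - T₃.2 + Δ * T₃.1) = 0 := by linear_combination hd3
  have := (mul_eq_zero.mp key).resolve_left hcne
  linarith

lemma seg_K3K2 (hu₂ : 0 < u₂) (hu₃ : 0 < u₃) :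
    ∀ z ∈ segment ℝ ((0, u₃) : ℝ × ℝ) ((u₂, 0) : ℝ × ℝ),
      u₃ * z.1 + u₂ * z.2 = u₂ * u₃ ∧ 0 ≤ z.1 ∧ 0 ≤ z.2 := by
  rintro z ⟨s, t, hs, ht, hst, hz⟩
  have h1 : z.1 = t * u₂ := by
    have := congrArg Prod.fst hz; simpa [Prod.smul_fst, smul_eq_mul] using this.symm
  have h2 : z.2 = s * u₃ := by
    have := congrArg Prod.snd hz; simpa [Prod.smul_snd, smul_eq_mul] using this.symm
  refine ⟨by rw [h1, h2]; linear_combination (u₂ * u₃) * hst, by rw [h1]; positivity, by rw [h2]; positivity⟩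

lemma seg_K2T2 (hcfg : GoodConfig a b Δ u₂ u₃ T₂ T₃) :
    ∀ z ∈ segment ℝ ((u₂, 0) : ℝ × ℝ) T₂, z.1 - Δ * z.2 = u₂ ∧ z.2 ≤ 0 := by
  rintro z ⟨s, t, hs, ht, hst, hz⟩
  have hT2 : T₂.2 < 0 := hcfg.1.2.1
  have hu2 := u2_eq hcfg
  have h1 : z.1 = s * u₂ + t * T₂.1 := by
    have := congrArg Prod.fst hz; simpa [Prod.smul_fst, smul_eq_mul] using this.symm
  have h2 : z.2 = t * T₂.2 := by
    have := congrArg Prod.snd hz; simpa [Prod.smul_snd, smul_eq_mul] using this.symm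
  constructor
  · rw [h1, h2]; linear_combination t * hu2 + u₂ * hst
  · rw [h2]; exact mul_nonpos_of_nonneg_of_nonpos ht hT2.le

lemma seg_T3K3 (hcfg : GoodConfig a b Δ u₂ u₃ T₂ T₃) :
    ∀ z ∈ segment ℝ T₃ ((0, u₃) : ℝ × ℝ), z.2 - Δ * z.1 = u₃ ∧ z.1 ≤ 0 := by
  rintro z ⟨s, t, hs, ht, hst, hz⟩
  have hT3 : T₃.1 < 0 := hcfg.2.1.2.1
  have hu3 := u3_eq hcfg
  have h1 : z.1 = s * T₃.1 := by
    have := congrArg Prod.fst hz; simpa [Prod.smul_fst, smul_eq_mul] using this.symm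
  have h2 : z.2 = s * T₃.2 + t * u₃ := by
    have := congrArg Prod.snd hz; simpa [Prod.smul_snd, smul_eq_mul] using this.symm
  constructor
  · rw [h1, h2]; linear_combination s * hu3 + u₃ * hst
  · rw [h1]; exact mul_nonpos_of_nonneg_of_nonpos hs hT3.le

end Aux

section Phi

variable {a b Δ u₂ u₃ : ℝ} {T₂ T₃ : ℝ × ℝ} {φ : ℝ × ℝ → ℝ}

lemma phi_quad1 (ha : 0 < a) (hb : 0 < b) (hΔ : 1 + a / b < Δ)
    (hcfg : GoodConfig a b Δ u₂ u₃ T₂ T₃)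
    (hφ : IsPhi (contourL a b Δ u₂ u₃ T₂ T₃) φ)
    (y : ℝ × ℝ) (hy : y ≠ 0) (h1 : 0 ≤ y.1) (h2 : 0 ≤ y.2) :
    u₃ * y.1 + u₂ * y.2 = u₂ * u₃ * φ y := by
  obtain ⟨hpos, hmem⟩ := hφ.2 y hy
  set f := φ y with hf
  have hfi : 0 < f⁻¹ := inv_pos.mpr hpos
  have hz1 : (f⁻¹ • y).1 = f⁻¹ * y.1 := rfl
  have hz2 : (f⁻¹ • y).2 = f⁻¹ * y.2 := rfl
  have hff : f * f⁻¹ = 1 := mul_inv_cancel₀ hpos.ne'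
  rcases hmem with ((h | h) | h) | h
  · obtain ⟨heq, -, -⟩ := seg_K3K2 hcfg.2.2.1 hcfg.2.2.2.1 _ h
    rw [hz1, hz2] at heq
    calc u₃ * y.1 + u₂ * y.2 = f * (u₃ * (f⁻¹ * y.1) + u₂ * (f⁻¹ * y.2)) := by
          field_simp <;> ring
      _ = u₂ * u₃ * f := by rw [heq]; ring
  · obtain ⟨heq, hle⟩ := seg_K2T2 hcfg _ h
    rw [hz1, hz2] at heq
    rw [hz2] at hle
    have hy2 : y.2 = 0 := by
      have h0 : f⁻¹ * y.2 = 0 := le_antisymm hle (by positivity)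
      rcases mul_eq_zero.mp h0 with h' | h'
      · exact absurd h' hfi.ne'
      · exact h'
    rw [hy2] at heq ⊢
    have : y.1 = f * u₂ := by
      have : f * (f⁻¹ * y.1 - Δ * (f⁻¹ * 0)) = f * u₂ := by rw [heq]
      calc y.1 = f * (f⁻¹ * y.1 - Δ * (f⁻¹ * 0)) := by field_simp; ring
        _ = f * u₂ := this
    rw [this]; ring
  · exfalso
    have := (arc_neg ha hb hΔ _ h).1
    rw [hz1] at this
    nlinarith
  · obtain ⟨heq, hle⟩ := seg_T3K3 hcfg _ h
    rw [hz1, hz2] at heq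
    rw [hz1] at hle
    have hy1 : y.1 = 0 := by
      have h0 : f⁻¹ * y.1 = 0 := le_antisymm hle (by positivity)
      rcases mul_eq_zero.mp h0 with h' | h'
      · exact absurd h' hfi.ne'
      · exact h'
    rw [hy1] at heq ⊢
    have : y.2 = f * u₃ := by
      have : f * (f⁻¹ * y.2 - Δ * (f⁻¹ * 0)) = f * u₃ := by rw [heq]
      calc y.2 = f * (f⁻¹ * y.2 - Δ * (f⁻¹ * 0)) := by field_simp; ring
        _ = f * u₃ := this
    rw [this]; ring

lemma phi_quad2 (ha : 0 < a) (hb : 0 < b) (hΔ : 1 + a / b < Δ)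
    (hcfg : GoodConfig a b Δ u₂ u₃ T₂ T₃)
    (hφ : IsPhi (contourL a b Δ u₂ u₃ T₂ T₃) φ)
    (y : ℝ × ℝ) (h1 : y.1 < 0) (h2 : 0 < y.2) :
    y.2 - Δ * y.1 = u₃ * φ y := by
  have hy : y ≠ 0 := by
    intro h; rw [h] at h1; exact lt_irrefl _ h1
  obtain ⟨hpos, hmem⟩ := hφ.2 y hy
  set f := φ y with hf
  have hfi : 0 < f⁻¹ := inv_pos.mpr hpos
  have hz1 : (f⁻¹ • y).1 = f⁻¹ * y.1 := rfl
  have hz2 : (f⁻¹ • y).2 = f⁻¹ * y.2 := rfl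
  rcases hmem with ((h | h) | h) | h
  · exfalso
    obtain ⟨-, hge, -⟩ := seg_K3K2 hcfg.2.2.1 hcfg.2.2.2.1 _ h
    rw [hz1] at hge
    nlinarith
  · exfalso
    obtain ⟨-, hle⟩ := seg_K2T2 hcfg _ h
    rw [hz2] at hle
    nlinarith
  · exfalso
    have := (arc_neg ha hb hΔ _ h).2
    rw [hz2] at this
    nlinarith
  · obtain ⟨heq, -⟩ := seg_T3K3 hcfg _ h
    rw [hz1, hz2] at heq
    calc y.2 - Δ * y.1 = f * (f⁻¹ * y.2 - Δ * (f⁻¹ * y.1)) := by field_simp <;> ring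
      _ = u₃ * f := by rw [heq]; ring

lemma phi_quad4 (ha : 0 < a) (hb : 0 < b) (hΔ : 1 + a / b < Δ)
    (hcfg : GoodConfig a b Δ u₂ u₃ T₂ T₃)
    (hφ : IsPhi (contourL a b Δ u₂ u₃ T₂ T₃) φ)
    (y : ℝ × ℝ) (h1 : 0 < y.1) (h2 : y.2 < 0) :
    y.1 - Δ * y.2 = u₂ * φ y := by
  have hy : y ≠ 0 := by
    intro h; rw [h] at h1; exact lt_irrefl _ h1
  obtain ⟨hpos, hmem⟩ := hφ.2 y hy
  set f := φ y with hf
  have hfi : 0 < f⁻¹ := inv_pos.mpr hpos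
  have hz1 : (f⁻¹ • y).1 = f⁻¹ * y.1 := rfl
  have hz2 : (f⁻¹ • y).2 = f⁻¹ * y.2 := rfl
  rcases hmem with ((h | h) | h) | h
  · exfalso
    obtain ⟨-, -, hge⟩ := seg_K3K2 hcfg.2.2.1 hcfg.2.2.2.1 _ h
    rw [hz2] at hge
    nlinarith
  · obtain ⟨heq, -⟩ := seg_K2T2 hcfg _ h
    rw [hz1, hz2] at heq
    calc y.1 - Δ * y.2 = f * (f⁻¹ * y.1 - Δ * (f⁻¹ * y.2)) := by field_simp <;> ring
      _ = u₂ * f := by rw [heq]; ring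
  · exfalso
    have := (arc_neg ha hb hΔ _ h).1
    rw [hz1] at this
    nlinarith
  · exfalso
    obtain ⟨-, hle⟩ := seg_T3K3 hcfg _ h
    rw [hz1] at hle
    nlinarith

end Phi


section Sums

lemma ssum_eval (l1 l2 l3 : ℝ) (g : ℤ × ℤ → ℝ) (y : ℤ × ℤ) :
    (∑' z : ℤ × ℤ, sker l1 l2 l3 y z * g z)
      = l2 * g (y + (1, 0)) + l3 * g (y + (0, 1)) + l1 * g (y - (1, 1)) := by
  have h12 : y + (1, 0) ≠ y + (0, 1) := by simp [Prod.ext_iff]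
  have h13 : y + (1, 0) ≠ y - (1, 1) := by
    simp only [ne_eq, Prod.ext_iff, Prod.fst_add, Prod.snd_add, Prod.fst_sub, Prod.snd_sub,
      Prod.fst_one, Prod.snd_one, not_and]
    intro h; omega
  have h23 : y + (0, 1) ≠ y - (1, 1) := by
    simp only [ne_eq, Prod.ext_iff, Prod.fst_add, Prod.snd_add, Prod.fst_sub, Prod.snd_sub,
      Prod.fst_one, Prod.snd_one, not_and]
    intro h; omega
  rw [tsum_eq_sum (s := {y + (1, 0), y + (0, 1), y - (1, 1)}) ?_]
  · rw [Finset.sum_insert (by simp [h12, h13]),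
      Finset.sum_insert (by simp [h23]), Finset.sum_singleton]
    rw [show sker l1 l2 l3 y (y + (1, 0)) = l2 by
        simp [sker, h12, h13]
      , show sker l1 l2 l3 y (y + (0, 1)) = l3 by
        simp [sker, Ne.symm h12, h23]
      , show sker l1 l2 l3 y (y - (1, 1)) = l1 by
        simp [sker, Ne.symm h13, Ne.symm h23]]
    ring
  · intro z hz
    simp only [Finset.mem_insert, Finset.mem_singleton, not_or] at hz
    obtain ⟨n1, n2, n3⟩ := hz
    have n3' : ¬ z = y - 1 := n3
    simp [sker, n1, n2, n3, n3']

lemma rker_axis2 (b12 b23 b2 : ℝ) (y : ℤ × ℤ) (hy1 : y.1 = 0) (hy2 : 0 < y.2)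
    (z : ℤ × ℤ) : rker b12 b23 b2 y z = if z = (0, 0) then b23 else 0 := by
  simp [rker, hy1, hy2, hy2.not_ge, lt_irrefl]

lemma rker_axis1 (b12 b23 b2 : ℝ) (y : ℤ × ℤ) (hy1 : 0 < y.1) (hy2 : y.2 = 0)
    (z : ℤ × ℤ) : rker b12 b23 b2 y z = if z = (0, 0) then b12 else 0 := by
  simp [rker, hy1, hy2, hy1.not_gt, lt_irrefl]

end Sums

/-- Lemma about the positive half-axes: for all sufficiently large `Δ`
there are `C > 0`, `γ > 0` such that for every `y ∈ ℤ²` on an open positive half-axis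
(`y = (0,y₃)`, `y₃ > 0`, or `y = (y₂,0)`, `y₂ > 0`) with `φ(y) > C`:
`Σ_z r_{yz}(φ(z) − φ(y)) ≤ −γ·φ(y)`; moreover `Σ_z s_{yz}(φ(z) − φ(y))` takes the
same value for all such `y` on the half-axis `{y₂ = 0, y₃ > 0}` with `φ(y) > C`, and
likewise on the half-axis `{y₂ > 0, y₃ = 0}` with `φ(y) > C`. -/
theorem stmt13 (l1 l2 l3 b12 b23 : ℝ)
    (hl1 : 0 < l1) (hl2 : 0 < l2) (hl3 : 0 < l3) (hb12 : 0 < b12) (hb23 : 0 < b23)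
    (hsum : l1 + l2 + l3 + b12 + b23 = 1)
    (a b : ℝ) (ha : 0 < a) (hb : 0 < b) :
    ∃ Δ₀ > (0 : ℝ), ∀ Δ > Δ₀, ∀ u₂ u₃ : ℝ, ∀ T₂ T₃ : ℝ × ℝ,
      GoodConfig a b Δ u₂ u₃ T₂ T₃ →
      ∀ φ : ℝ × ℝ → ℝ, IsPhi (contourL a b Δ u₂ u₃ T₂ T₃) φ →
      ∃ C > (0 : ℝ), ∃ γ > (0 : ℝ),
        (∀ y : ℤ × ℤ, ((y.1 = 0 ∧ 0 < y.2) ∨ (0 < y.1 ∧ y.2 = 0)) → C < φ (iv y) →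
          (∑' z : ℤ × ℤ, rker b12 b23 (l2 / (l2 + b12)) y z * (φ (iv z) - φ (iv y)))
            ≤ -(γ * φ (iv y))) ∧
        (∀ y y' : ℤ × ℤ, y.1 = 0 → 0 < y.2 → C < φ (iv y) →
          y'.1 = 0 → 0 < y'.2 → C < φ (iv y') →
          (∑' z : ℤ × ℤ, sker l1 l2 l3 y z * (φ (iv z) - φ (iv y)))
            = ∑' z : ℤ × ℤ, sker l1 l2 l3 y' z * (φ (iv z) - φ (iv y'))) ∧
        (∀ y y' : ℤ × ℤ, 0 < y.1 → y.2 = 0 → C < φ (iv y) →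
          0 < y'.1 → y'.2 = 0 → C < φ (iv y') →
          (∑' z : ℤ × ℤ, sker l1 l2 l3 y z * (φ (iv z) - φ (iv y)))
            = ∑' z : ℤ × ℤ, sker l1 l2 l3 y' z * (φ (iv z) - φ (iv y'))) := by
  refine ⟨2 + a / b, by positivity, ?_⟩
  intro Δ hΔgt u₂ u₃ T₂ T₃ hcfg φ hφ
  have hab : 0 < a / b := div_pos ha hb
  have hΔ : 1 + a / b < Δ := by linarith
  have hΔ1 : 1 < Δ := by linarith
  have hu₂ : 0 < u₂ := hcfg.2.2.1
  have hu₃ : 0 < u₃ := hcfg.2.2.2.1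
  set C : ℝ := 2 / u₂ + 2 / u₃ with hCdef
  have hCpos : 0 < C := by positivity
  have phi0 : φ (iv (0, 0)) = 0 := by
    have h : iv (0, 0) = (0 : ℝ × ℝ) := by simp [iv, Prod.ext_iff]
    rw [h]; exact hφ.1
  -- φ on the positive vertical axis
  have vert : ∀ w : ℤ × ℤ, w.1 = 0 → 0 < w.2 → φ (iv w) = (w.2 : ℝ) / u₃ := by
    intro w h1 h2
    have c1 : (iv w).1 = 0 := by simp [iv, h1]
    have c2 : (iv w).2 = (w.2 : ℝ) := rfl
    have h2' : (0 : ℝ) < (w.2 : ℝ) := by exact_mod_cast h2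
    have hne : iv w ≠ 0 := by
      intro h
      have := congrArg Prod.snd h
      rw [c2] at this
      simp at this
      omega
    have hq := phi_quad1 ha hb hΔ hcfg hφ (iv w) hne (by rw [c1]) (by rw [c2]; linarith)
    rw [c1, c2] at hq
    have h6 := mul_left_cancel₀ hu₂.ne'
      (show u₂ * (w.2 : ℝ) = u₂ * (u₃ * φ (iv w)) by linarith)
    rw [h6]
    field_simp
  -- φ on the positive horizontal axis
  have horz : ∀ w : ℤ × ℤ, 0 < w.1 → w.2 = 0 → φ (iv w) = (w.1 : ℝ) / u₂ := by
    intro w h1 h2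
    have c1 : (iv w).1 = (w.1 : ℝ) := rfl
    have c2 : (iv w).2 = 0 := by simp [iv, h2]
    have h1' : (0 : ℝ) < (w.1 : ℝ) := by exact_mod_cast h1
    have hne : iv w ≠ 0 := by
      intro h
      have := congrArg Prod.fst h
      rw [c1] at this
      simp at this
      omega
    have hq := phi_quad1 ha hb hΔ hcfg hφ (iv w) hne (by rw [c1]; linarith) (by rw [c2])
    rw [c1, c2] at hq
    have h6 := mul_left_cancel₀ hu₃.ne'
      (show u₃ * (w.1 : ℝ) = u₃ * (u₂ * φ (iv w)) by linarith)
    rw [h6]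
    field_simp
  refine ⟨C, hCpos, min b12 b23, lt_min hb12 hb23, ?_, ?_, ?_⟩
  · -- rollback bound
    intro y hy hCy
    have hφy : 0 < φ (iv y) := lt_trans hCpos hCy
    rcases hy with ⟨h1, h2⟩ | ⟨h1, h2⟩
    · rw [tsum_eq_single ((0 : ℤ), (0 : ℤ))
        (fun z hz => by rw [rker_axis2 _ _ _ y h1 h2, if_neg hz, zero_mul])]
      rw [rker_axis2 _ _ _ y h1 h2, if_pos rfl, phi0]
      have hmin : min b12 b23 ≤ b23 := min_le_right _ _
      nlinarith
    · rw [tsum_eq_single ((0 : ℤ), (0 : ℤ))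
        (fun z hz => by rw [rker_axis1 _ _ _ y h1 h2, if_neg hz, zero_mul])]
      rw [rker_axis1 _ _ _ y h1 h2, if_pos rfl, phi0]
      have hmin : min b12 b23 ≤ b12 := min_le_left _ _
      nlinarith
  · -- vertical axis: constant s-sum
    have key2 : ∀ w : ℤ × ℤ, w.1 = 0 → 0 < w.2 → C < φ (iv w) → 2 ≤ w.2 := by
      intro w h1 h2 h3
      rw [vert w h1 h2] at h3
      have h4 : 2 / u₃ < (w.2 : ℝ) / u₃ := by
        have : 0 < 2 / u₂ := by positivity
        linarith
      have h5 : (2 : ℝ) < (w.2 : ℝ) := by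
        have := mul_lt_mul_of_pos_right h4 hu₃
        rw [div_mul_cancel₀ _ hu₃.ne', div_mul_cancel₀ _ hu₃.ne'] at this
        exact this
      have : (2 : ℤ) < w.2 := by exact_mod_cast h5
      omega
    have ssum2 : ∀ w : ℤ × ℤ, w.1 = 0 → 2 ≤ w.2 →
        (∑' z : ℤ × ℤ, sker l1 l2 l3 w z * (φ (iv z) - φ (iv w)))
          = l2 * (1 / u₂) + l3 * (1 / u₃) + l1 * ((Δ - 1) / u₃) := by
      intro w h1 h2
      rw [ssum_eval l1 l2 l3 (fun z => φ (iv z) - φ (iv w)) w]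
      have e0 : φ (iv w) = (w.2 : ℝ) / u₃ := vert w h1 (by omega)
      have e2 : φ (iv (w + (0, 1))) = ((w.2 : ℝ) + 1) / u₃ := by
        have := vert (w + (0, 1)) (by simp [h1]) (by simp; omega)
        rw [this]
        push_cast [Prod.snd_add, Prod.fst_add]
        ring
      -- point (1, w.2)
      have e1 : φ (iv (w + (1, 0))) = 1 / u₂ + (w.2 : ℝ) / u₃ := by
        have c1 : (iv (w + (1, 0))).1 = 1 := by simp [iv, h1]
        have c2 : (iv (w + (1, 0))).2 = (w.2 : ℝ) := by simp [iv]
        have hne : iv (w + (1, 0)) ≠ 0 := by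
          intro h
          have := congrArg Prod.fst h
          rw [c1] at this
          norm_num at this
        have hw2 : (0 : ℝ) ≤ (w.2 : ℝ) := by exact_mod_cast (by omega : (0 : ℤ) ≤ w.2)
        have hq := phi_quad1 ha hb hΔ hcfg hφ _ hne (by rw [c1]; norm_num)
          (by rw [c2]; exact hw2)
        rw [c1, c2] at hq
        field_simp at hq ⊢
        linarith
      -- point (-1, w.2 - 1)
      have e3 : φ (iv (w - (1, 1))) = ((w.2 : ℝ) - 1 + Δ) / u₃ := by
        have c1 : (iv (w - (1, 1))).1 = -1 := by simp [iv, h1]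
        have c2 : (iv (w - (1, 1))).2 = (w.2 : ℝ) - 1 := by simp [iv]
        have hpos : (0 : ℝ) < (w.2 : ℝ) - 1 := by
          have : (1 : ℝ) < (w.2 : ℝ) := by exact_mod_cast (by omega : (1 : ℤ) < w.2)
          linarith
        have hq := phi_quad2 ha hb hΔ hcfg hφ (iv (w - (1, 1)))
          (by rw [c1]; norm_num) (by rw [c2]; exact hpos)
        rw [c1, c2] at hq
        field_simp at hq ⊢
        linarith
      rw [e0, e1, e2, e3]
      field_simp
      ring
    intro y y' h1 h2 h3 h1' h2' h3'
    rw [ssum2 y h1 (key2 y h1 h2 h3), ssum2 y' h1' (key2 y' h1' h2' h3')]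
  · -- horizontal axis: constant s-sum
    have key1 : ∀ w : ℤ × ℤ, 0 < w.1 → w.2 = 0 → C < φ (iv w) → 2 ≤ w.1 := by
      intro w h1 h2 h3
      rw [horz w h1 h2] at h3
      have h4 : 2 / u₂ < (w.1 : ℝ) / u₂ := by
        have : 0 < 2 / u₃ := by positivity
        linarith
      have h5 : (2 : ℝ) < (w.1 : ℝ) := by
        have := mul_lt_mul_of_pos_right h4 hu₂
        rw [div_mul_cancel₀ _ hu₂.ne', div_mul_cancel₀ _ hu₂.ne'] at this
        exact this
      have : (2 : ℤ) < w.1 := by exact_mod_cast h5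
      omega
    have ssum1 : ∀ w : ℤ × ℤ, 2 ≤ w.1 → w.2 = 0 →
        (∑' z : ℤ × ℤ, sker l1 l2 l3 w z * (φ (iv z) - φ (iv w)))
          = l2 * (1 / u₂) + l3 * (1 / u₃) + l1 * ((Δ - 1) / u₂) := by
      intro w h2 h1
      rw [ssum_eval l1 l2 l3 (fun z => φ (iv z) - φ (iv w)) w]
      have e0 : φ (iv w) = (w.1 : ℝ) / u₂ := horz w (by omega) h1
      have e1 : φ (iv (w + (1, 0))) = ((w.1 : ℝ) + 1) / u₂ := by
        have := horz (w + (1, 0)) (by simp; omega) (by simp [h1])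
        rw [this]
        push_cast [Prod.snd_add, Prod.fst_add]
        ring
      -- point (w.1, 1)
      have e2 : φ (iv (w + (0, 1))) = (w.1 : ℝ) / u₂ + 1 / u₃ := by
        have c1 : (iv (w + (0, 1))).1 = (w.1 : ℝ) := by simp [iv]
        have c2 : (iv (w + (0, 1))).2 = 1 := by simp [iv, h1]
        have hne : iv (w + (0, 1)) ≠ 0 := by
          intro h
          have := congrArg Prod.snd h
          rw [c2] at this
          norm_num at this
        have hw1 : (0 : ℝ) ≤ (w.1 : ℝ) := by exact_mod_cast (by omega : (0 : ℤ) ≤ w.1)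
        have hq := phi_quad1 ha hb hΔ hcfg hφ _ hne (by rw [c1]; exact hw1)
          (by rw [c2]; norm_num)
        rw [c1, c2] at hq
        field_simp at hq ⊢
        linarith
      -- point (w.1 - 1, -1)
      have e3 : φ (iv (w - (1, 1))) = ((w.1 : ℝ) - 1 + Δ) / u₂ := by
        have c1 : (iv (w - (1, 1))).1 = (w.1 : ℝ) - 1 := by simp [iv]
        have c2 : (iv (w - (1, 1))).2 = -1 := by simp [iv, h1]
        have hpos : (0 : ℝ) < (w.1 : ℝ) - 1 := by
          have : (1 : ℝ) < (w.1 : ℝ) := by exact_mod_cast (by omega : (1 : ℤ) < w.1)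
          linarith
        have hq := phi_quad4 ha hb hΔ hcfg hφ (iv (w - (1, 1)))
          (by rw [c1]; exact hpos) (by rw [c2]; norm_num)
        rw [c1, c2] at hq
        field_simp at hq ⊢
        linarith
      rw [e0, e1, e2, e3]
      field_simp
      ring
    intro y y' h1 h2 h3 h1' h2' h3'
    rw [ssum1 y (key1 y h1 h2 h3) h2, ssum1 y' (key1 y' h1' h2' h3') h2']
end
end

section
/- Assume λ₁<λ₂ and λ₁<λ₃. Then there exist a function f:ℤ²→[0,∞), a constant ε>0 and a finite set A⊆ℤ² such that Σ_z p_{yz}·f(z) − f(y) < −ε for every y∈ℤ²∖A, and Σ_z p_{yz}·f(z) < ∞ for every y∈A (i.e. the Foster–Lyapunov drift criterion for ergodicity is satisfied by the embedded relative-coordinate chain of the three-processor cascade model). -/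
noncomputable section

namespace S15

def P (n : ℤ) : ℝ := max (n : ℝ) 0

lemma P_nonneg (n : ℤ) : 0 ≤ P n := le_max_right _ _

lemma P_of_nonneg {n : ℤ} (h : 0 ≤ n) : P n = (n : ℝ) :=
  max_eq_left (by exact_mod_cast h)

lemma P_of_nonpos {n : ℤ} (h : n ≤ 0) : P n = 0 :=
  max_eq_right (by exact_mod_cast h)

lemma P_mono {m n : ℤ} (h : m ≤ n) : P m ≤ P n :=
  max_le_max (by exact_mod_cast h) le_rfl

lemma P_step (n : ℤ) : P (n + 1) ≤ P n + 1 := by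
  unfold P
  rcases le_total ((n : ℝ)) 0 with h | h
  · rcases le_total ((n : ℝ) + 1) 0 with h' | h'
    · rw [max_eq_right (by push_cast; linarith), max_eq_right h]; norm_num
    · rw [max_eq_left (by push_cast; linarith), max_eq_right h]; push_cast; linarith
  · rw [max_eq_left (by push_cast; linarith), max_eq_left h]; push_cast; linarith

lemma P_le_one {n : ℤ} (h : n ≤ 1) : P n ≤ 1 :=
  max_le (by exact_mod_cast h) (by norm_num)

def phi (T t : ℝ) : ℝ := if t ≤ 0 then 0 else if t ≤ T then t ^ 2 / (2 * T) else t - T / 2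

section phi
variable {T : ℝ} (hT : 1 ≤ T)
include hT

lemma phi_nonneg (t : ℝ) : 0 ≤ phi T t := by
  have h2T : (0:ℝ) < 2 * T := by linarith
  unfold phi; split_ifs
  · exact le_refl 0
  · exact div_nonneg (sq_nonneg t) h2T.le
  · linarith

omit hT in
lemma phi_of_nonpos {T t : ℝ} (h : t ≤ 0) : phi T t = 0 := by
  unfold phi; rw [if_pos h]

lemma phi_eq_quad {t : ℝ} (h0 : 0 ≤ t) (h1 : t ≤ T) : phi T t = t ^ 2 / (2 * T) := by
  unfold phi
  rcases eq_or_lt_of_le h0 with h | h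
  · rw [if_pos (by linarith), ← h]; norm_num
  · rw [if_neg (by linarith), if_pos h1]

lemma phi_eq_lin {t : ℝ} (h1 : T ≤ t) : phi T t = t - T / 2 := by
  have hTpos : (0:ℝ) < T := by linarith
  unfold phi
  rw [if_neg (by linarith)]
  split_ifs with h2
  · have ht : t = T := le_antisymm h2 h1
    rw [ht]; field_simp; ring
  · rfl

lemma phi_le_quad {t : ℝ} (h1 : t ≤ T) : phi T t ≤ t ^ 2 / (2 * T) := by
  have h2T : (0:ℝ) < 2 * T := by linarith
  rcases le_total t 0 with h | h
  · rw [phi_of_nonpos h]; exact div_nonneg (sq_nonneg t) h2T.le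
  · rw [phi_eq_quad hT h h1]

lemma phi_mono {t s : ℝ} (h : t ≤ s) : phi T t ≤ phi T s := by
  have h2T : (0:ℝ) < 2 * T := by linarith
  rcases le_total t 0 with ht0 | ht0
  · rw [phi_of_nonpos ht0]; exact phi_nonneg hT s
  rcases le_total s T with hsT | hsT
  · rw [phi_eq_quad hT ht0 (h.trans hsT), phi_eq_quad hT (ht0.trans h) hsT]
    exact (div_le_div_iff_of_pos_right h2T).mpr (by nlinarith)
  rcases le_total t T with htT | htT
  · rw [phi_eq_quad hT ht0 htT, phi_eq_lin hT hsT]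
    have h1 : t ^ 2 / (2 * T) ≤ T ^ 2 / (2 * T) := (div_le_div_iff_of_pos_right h2T).mpr (by nlinarith)
    have h2 : T ^ 2 / (2 * T) = T / 2 := by field_simp
    linarith [h1, h2.le]
  · rw [phi_eq_lin hT htT, phi_eq_lin hT hsT]; linarith

lemma phi_step (t : ℝ) : phi T (t + 1) ≤ phi T t + 1 := by
  have h2T : (0:ℝ) < 2 * T := by linarith
  rcases le_total (t + 1) 0 with h1 | h1
  · rw [phi_of_nonpos h1, phi_of_nonpos (by linarith)]; linarith
  rcases le_total t 0 with h2 | h2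
  · rw [phi_of_nonpos h2]
    have : phi T (t + 1) ≤ (t+1) ^ 2 / (2 * T) := phi_le_quad hT (by linarith)
    have h3 : (t+1) ^ 2 / (2 * T) ≤ (2 * T) / (2 * T) := (div_le_div_iff_of_pos_right h2T).mpr (by nlinarith)
    rw [div_self h2T.ne'] at h3; linarith
  rcases le_total (t + 1) T with h3 | h3
  · rw [phi_eq_quad hT h1 h3, phi_eq_quad hT h2 (by linarith)]
    have : (t+1) ^ 2 / (2 * T) ≤ (t ^ 2 + 2 * T) / (2 * T) := (div_le_div_iff_of_pos_right h2T).mpr (by nlinarith)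
    have h4 : (t ^ 2 + 2 * T) / (2 * T) = t ^ 2 / (2 * T) + 1 := by field_simp
    linarith
  rcases le_total t T with h4 | h4
  · rw [phi_eq_lin hT h3, phi_eq_quad hT h2 h4]
    have h5 : (2 * T * t - T ^ 2) / (2 * T) ≤ t ^ 2 / (2 * T) := (div_le_div_iff_of_pos_right h2T).mpr (by nlinarith [sq_nonneg (t - T)])
    have h6 : (2 * T * t - T ^ 2) / (2 * T) = t - T / 2 := by field_simp
    linarith
  · rw [phi_eq_lin hT h3, phi_eq_lin hT h4]; linarith

lemma phi_secdiff (t : ℝ) : phi T (t + 1) + phi T (t - 1) ≤ 2 * phi T t + 1 / T := by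
  have h2T : (0:ℝ) < 2 * T := by linarith
  have hTpos : (0:ℝ) < T := by linarith
  have hq : ∀ x : ℝ, 0 ≤ x → x ≤ T → phi T x = x ^ 2 / (2 * T) := fun x hx hx' => phi_eq_quad hT hx hx'
  rcases le_total t (-1) with h1 | h1
  · rw [phi_of_nonpos (show t + 1 ≤ 0 by linarith), phi_of_nonpos (show t - 1 ≤ 0 by linarith),
      phi_of_nonpos (show t ≤ 0 by linarith)]
    have : 0 < 1 / T := one_div_pos.mpr hTpos
    linarith
  rcases le_total t 0 with h2 | h2
  · rw [phi_of_nonpos h2, phi_of_nonpos (show t - 1 ≤ 0 by linarith)]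
    have ha : phi T (t + 1) ≤ (t+1) ^ 2 / (2 * T) := phi_le_quad hT (by linarith)
    have hb : (t+1) ^ 2 / (2 * T) ≤ 2 / (2 * T) := (div_le_div_iff_of_pos_right h2T).mpr (by nlinarith)
    have hc : (2 : ℝ) / (2 * T) = 1 / T := by field_simp
    linarith
  rcases le_total t (T - 1) with h3 | h3
  · rw [hq (t+1) (by linarith) (by linarith), hq t h2 (by linarith)]
    have ha : phi T (t - 1) ≤ (t-1) ^ 2 / (2 * T) := phi_le_quad hT (by linarith)
    have hb : (t+1) ^ 2 / (2 * T) + (t-1) ^ 2 / (2 * T) = 2 * (t ^ 2 / (2 * T)) + 1 / T := by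
      field_simp; ring
    linarith
  rcases le_total t T with h4 | h4
  · rw [phi_eq_lin hT (by linarith), hq t h2 h4]
    have ha : phi T (t - 1) ≤ (t-1) ^ 2 / (2 * T) := phi_le_quad hT (by linarith)
    have e1 : 2 * (t ^ 2 / (2 * T)) + 1 / T = (2 * t ^ 2 + 2) / (2 * T) := by
      field_simp
    have e2 : t + 1 - T / 2 + (t-1) ^ 2 / (2 * T)
        = (2 * T * (t + 1) - T ^ 2 + (t - 1) ^ 2) / (2 * T) := by
      field_simp
    have hb : (2 * T * (t + 1) - T ^ 2 + (t - 1) ^ 2) / (2 * T) ≤ (2 * t ^ 2 + 2) / (2 * T) :=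
      (div_le_div_iff_of_pos_right h2T).mpr (by nlinarith [sq_nonneg (t + 1 - T)])
    linarith [e1, e2, hb]
  rcases le_total t (T + 1) with h5 | h5
  · rw [phi_eq_lin hT (by linarith), phi_eq_lin hT h4]
    have ha : phi T (t - 1) ≤ (t-1) ^ 2 / (2 * T) := phi_le_quad hT (by linarith)
    have e1 : 2 * (t - T / 2) + 1 / T = (2 * T * (2 * t - T) + 2) / (2 * T) := by
      field_simp
    have e2 : t + 1 - T / 2 + (t-1) ^ 2 / (2 * T)
        = (2 * T * (t + 1) - T ^ 2 + (t - 1) ^ 2) / (2 * T) := by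
      field_simp
    have hm : (0:ℝ) ≤ (T - t + 1) * (t - T) :=
      mul_nonneg (by linarith) (by linarith)
    have hb : (2 * T * (t + 1) - T ^ 2 + (t - 1) ^ 2) / (2 * T)
        ≤ (2 * T * (2 * t - T) + 2) / (2 * T) :=
      (div_le_div_iff_of_pos_right h2T).mpr (by nlinarith [hm])
    linarith [e1, e2, hb]
  · rw [phi_eq_lin hT (show T ≤ t + 1 by linarith), phi_eq_lin hT (show T ≤ t - 1 by linarith),
      phi_eq_lin hT h4]
    have : 0 < 1 / T := one_div_pos.mpr hTpos
    linarith

lemma phi_slope_one {t : ℝ} (h : T + 1 ≤ t) : phi T t = phi T (t - 1) + 1 := by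
  rw [phi_eq_lin hT (by linarith), phi_eq_lin hT (by linarith)]; ring

lemma phi_one : phi T 1 = 1 / (2 * T) := by
  unfold phi; rw [if_neg (by norm_num), if_pos hT]; norm_num

end phi


/-! ### Lyapunov function -/

def lyap (al be w T : ℝ) (y : ℤ × ℤ) : ℝ :=
  al * P y.1 + be * P y.2 + w * P (y.2 - y.1) + P (-y.1) + phi T (P (-y.2) - P (-y.1))

lemma lyap_eval (al be w T : ℝ) (a b : ℤ) :
    lyap al be w T (a, b) = al * P a + be * P b + w * P (b - a) + P (-a)
      + phi T (P (-b) - P (-a)) := rfl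

lemma lyap_nonneg {al be w T : ℝ} (hal : 0 ≤ al) (hbe : 0 ≤ be) (hw : 0 ≤ w) (hT : 1 ≤ T)
    (y : ℤ × ℤ) : 0 ≤ lyap al be w T y := by
  unfold lyap
  have h1 := P_nonneg y.1
  have h2 := P_nonneg y.2
  have h3 := P_nonneg (y.2 - y.1)
  have h4 := P_nonneg (-y.1)
  have h5 := phi_nonneg hT (P (-y.2) - P (-y.1))
  positivity

/-! ### tsum helpers -/

lemma summable_if_point (c : ℤ × ℤ) (p : ℝ) (g : ℤ × ℤ → ℝ) :
    Summable (fun z => (if z = c then p else 0) * g z) := by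
  apply summable_of_ne_finset_zero (s := {c})
  intro z hz
  rw [if_neg (by simpa using hz), zero_mul]

lemma summable_point (c : ℤ × ℤ) (p : ℝ) :
    Summable (fun z : ℤ × ℤ => if z = c then p else 0) := by
  apply summable_of_ne_finset_zero (s := {c})
  intro z hz
  rw [if_neg (by simpa using hz)]

lemma tsum_if_point (c : ℤ × ℤ) (p : ℝ) (g : ℤ × ℤ → ℝ) :
    ∑' z : ℤ × ℤ, (if z = c then p else 0) * g z = p * g c := by
  rw [show (fun z : ℤ × ℤ => (if z = c then p else 0) * g z)
      = fun z => if z = c then p * g c else 0 from funext fun z => by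
    by_cases h : z = c <;> simp [h]]
  exact tsum_ite_eq c _

lemma tsum_eval4 (k g : ℤ × ℤ → ℝ) (c1 c2 c3 c4 : ℤ × ℤ) (p1 p2 p3 p4 : ℝ)
    (hk : ∀ z, k z * g z = (if z = c1 then p1 else 0) * g z + (if z = c2 then p2 else 0) * g z
      + (if z = c3 then p3 else 0) * g z + (if z = c4 then p4 else 0) * g z) :
    Summable (fun z => k z * g z) ∧
      ∑' z : ℤ × ℤ, k z * g z = p1 * g c1 + p2 * g c2 + p3 * g c3 + p4 * g c4 := by
  have h1 := summable_if_point c1 p1 g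
  have h2 := summable_if_point c2 p2 g
  have h3 := summable_if_point c3 p3 g
  have h4 := summable_if_point c4 p4 g
  have e : (fun z => k z * g z) = fun z => (if z = c1 then p1 else 0) * g z
      + (if z = c2 then p2 else 0) * g z + (if z = c3 then p3 else 0) * g z
      + (if z = c4 then p4 else 0) * g z := funext hk
  constructor
  · rw [e]; exact ((h1.add h2).add h3).add h4
  · rw [e, Summable.tsum_add ((h1.add h2).add h3) h4, Summable.tsum_add (h1.add h2) h3, Summable.tsum_add h1 h2,
      tsum_if_point, tsum_if_point, tsum_if_point, tsum_if_point]

lemma tsum_eval4B (k g B : ℤ × ℤ → ℝ) (c1 c2 c3 c4 c0 : ℤ × ℤ) (p1 p2 p3 p4 v : ℝ)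
    (hk : ∀ z, k z * g z = (if z = c1 then p1 else 0) * g z + (if z = c2 then p2 else 0) * g z
      + (if z = c3 then p3 else 0) * g z + (if z = c4 then p4 else 0) * g z + B z)
    (hBsum : Summable B) (hBle : ∀ z, B z ≤ (if z = c0 then v else 0)) :
    Summable (fun z => k z * g z) ∧
      ∑' z : ℤ × ℤ, k z * g z ≤ p1 * g c1 + p2 * g c2 + p3 * g c3 + p4 * g c4 + v := by
  have h1 := summable_if_point c1 p1 g
  have h2 := summable_if_point c2 p2 g
  have h3 := summable_if_point c3 p3 g
  have h4 := summable_if_point c4 p4 g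
  have hpts := ((h1.add h2).add h3).add h4
  have e : (fun z => k z * g z) = fun z => ((if z = c1 then p1 else 0) * g z
      + (if z = c2 then p2 else 0) * g z + (if z = c3 then p3 else 0) * g z
      + (if z = c4 then p4 else 0) * g z) + B z := funext fun z => by rw [hk z]
  have hBtsum : ∑' z : ℤ × ℤ, B z ≤ v := by
    calc ∑' z : ℤ × ℤ, B z ≤ ∑' z : ℤ × ℤ, (if z = c0 then v else 0) :=
          Summable.tsum_le_tsum hBle hBsum (summable_point c0 v)
      _ = v := tsum_ite_eq c0 (fun _ => v)
  constructor
  · rw [e]; exact hpts.add hBsum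
  · rw [e, Summable.tsum_add hpts hBsum, Summable.tsum_add ((h1.add h2).add h3) h4, Summable.tsum_add (h1.add h2) h3,
      Summable.tsum_add h1 h2, tsum_if_point, tsum_if_point, tsum_if_point, tsum_if_point]
    linarith [hBtsum]

/-! ### finite support of the kernel -/

def bigSupp (y : ℤ × ℤ) : Finset (ℤ × ℤ) :=
  {y + (1, 0), y + (0, 1), y - (1, 1), ((0 : ℤ), y.2), (y.1, y.1)} ∪
    (Finset.Icc (0 : ℤ) (max y.1 y.2)).image (fun j => ((0 : ℤ), j))

lemma sr_eq_zero (l1 l2 l3 b12 b23 q : ℝ) (y z : ℤ × ℤ) (hz : z ∉ bigSupp y) :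
    sker l1 l2 l3 y z + rker b12 b23 q y z = 0 := by
  simp only [bigSupp, Finset.mem_union, Finset.mem_insert, Finset.mem_singleton,
    Finset.mem_image, Finset.mem_Icc, not_or, not_exists] at hz
  obtain ⟨⟨h1, h2, h3, h4, h5⟩, h6⟩ := hz
  have hmax1 := le_max_left y.1 y.2
  have hmax2 := le_max_right y.1 y.2
  have hmem : ∀ j : ℤ, 0 ≤ j → j ≤ max y.1 y.2 → ((0 : ℤ), j) ≠ z := by
    intro j hj1 hj2 hEq
    exact h6 j (by exact ⟨⟨hj1, hj2⟩, hEq⟩)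
  have hs3 : ¬(0 < y.2 ∧ y.2 ≤ y.1 ∧ z.1 = 0 ∧ 0 ≤ z.2 ∧ z.2 < y.2) := by
    rintro ⟨hc1, hc2, hc3, hc4, hc5⟩
    exact hmem z.2 hc4 (by omega) (by rw [← hc3])
  have hs5 : ¬(0 < y.1 ∧ y.1 < y.2 ∧ z.1 = 0 ∧ 0 ≤ z.2 ∧ z.2 ≤ y.1) := by
    rintro ⟨hc1, hc2, hc3, hc4, hc5⟩
    exact hmem z.2 hc4 (by omega) (by rw [← hc3])
  unfold sker rker
  rw [if_neg h1, if_neg h2, if_neg h3,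
    if_neg (fun h => h4 h.2.2),
    if_neg (fun h => h5 h.2),
    if_neg hs3,
    if_neg (fun h => h4 h.2.2),
    if_neg hs5,
    if_neg (fun h => h4 h.2.2)]
  ring

/-! ### bridge from `pker` to the centered kernel sum -/

lemma summable_sr (l1 l2 l3 b12 b23 q : ℝ) (y : ℤ × ℤ) :
    Summable (fun z => sker l1 l2 l3 y z + rker b12 b23 q y z) :=
  summable_of_ne_finset_zero (s := bigSupp y) (fun z hz => sr_eq_zero l1 l2 l3 b12 b23 q y z hz)

lemma summable_sr_mul (l1 l2 l3 b12 b23 q : ℝ) (y : ℤ × ℤ) (g : ℤ × ℤ → ℝ) :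
    Summable (fun z => (sker l1 l2 l3 y z + rker b12 b23 q y z) * g z) :=
  summable_of_ne_finset_zero (s := bigSupp y)
    (fun z hz => by rw [sr_eq_zero l1 l2 l3 b12 b23 q y z hz, zero_mul])

lemma pker_bridge (l1 l2 l3 b12 b23 q : ℝ) (F : ℤ × ℤ → ℝ) (y : ℤ × ℤ) :
    Summable (fun z => pker l1 l2 l3 b12 b23 q y z * F z) ∧
    (∑' z : ℤ × ℤ, pker l1 l2 l3 b12 b23 q y z * F z) - F y
      = ∑' z : ℤ × ℤ, (sker l1 l2 l3 y z + rker b12 b23 q y z) * (F z - F y) := by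
  set S := ∑' w : ℤ × ℤ, (sker l1 l2 l3 y w + rker b12 b23 q y w) with hS
  have hsr := summable_sr l1 l2 l3 b12 b23 q y
  have hsrF := summable_sr_mul l1 l2 l3 b12 b23 q y F
  have e : (fun z => pker l1 l2 l3 b12 b23 q y z * F z)
      = fun z => (sker l1 l2 l3 y z + rker b12 b23 q y z) * F z
        + (if z = y then 1 - S else 0) * F z := by
    funext z; unfold pker; rw [← hS]; ring
  constructor
  · rw [e]; exact hsrF.add (summable_if_point y (1 - S) F)
  · rw [e, Summable.tsum_add hsrF (summable_if_point y (1 - S) F), tsum_if_point]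
    have e2 : (fun z => (sker l1 l2 l3 y z + rker b12 b23 q y z) * (F z - F y))
        = fun z => (sker l1 l2 l3 y z + rker b12 b23 q y z) * F z
          - (sker l1 l2 l3 y z + rker b12 b23 q y z) * F y := by
      funext z; ring
    rw [e2, Summable.tsum_sub hsrF (hsr.mul_right (F y)), hsr.tsum_mul_right (F y), ← hS]
    ring

/-! ### reduction of `rker` in the various regions -/

def rB (b12 q : ℝ) (y z : ℤ × ℤ) : ℝ :=
  (if 0 < y.2 ∧ y.2 ≤ y.1 ∧ z.1 = 0 ∧ 0 ≤ z.2 ∧ z.2 < y.2 then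
      b12 * (1 - q) ^ z.2.toNat * q else 0) +
  (if 0 < y.2 ∧ y.2 ≤ y.1 ∧ z = (0, y.2) then b12 * (1 - q) ^ y.2.toNat else 0) +
  (if 0 < y.1 ∧ y.1 < y.2 ∧ z.1 = 0 ∧ 0 ≤ z.2 ∧ z.2 ≤ y.1 then
      b12 * (1 - q) ^ z.2.toNat * q else 0) +
  (if 0 < y.1 ∧ y.1 < y.2 ∧ z = (0, y.2) then b12 * (1 - q) ^ (y.1.toNat + 1) else 0)

lemma rker_of_nonpos (b12 b23 q : ℝ) (y z : ℤ × ℤ) (hy : y.1 ≤ 0) :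
    rker b12 b23 q y z = if y.1 < y.2 ∧ z = (y.1, y.1) then b23 else 0 := by
  unfold rker
  rw [if_neg (show ¬(0 < y.1 ∧ y.2 ≤ 0 ∧ z = (0, y.2)) by rintro ⟨h, -⟩; omega),
    if_neg (show ¬(0 < y.2 ∧ y.2 ≤ y.1 ∧ z.1 = 0 ∧ 0 ≤ z.2 ∧ z.2 < y.2) by
      rintro ⟨h1, h2, -⟩; omega),
    if_neg (show ¬(0 < y.2 ∧ y.2 ≤ y.1 ∧ z = (0, y.2)) by rintro ⟨h1, h2, -⟩; omega),
    if_neg (show ¬(0 < y.1 ∧ y.1 < y.2 ∧ z.1 = 0 ∧ 0 ≤ z.2 ∧ z.2 ≤ y.1) by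
      rintro ⟨h, -⟩; omega),
    if_neg (show ¬(0 < y.1 ∧ y.1 < y.2 ∧ z = (0, y.2)) by rintro ⟨h, -⟩; omega)]
  ring

lemma rker_posneg (b12 b23 q : ℝ) (y z : ℤ × ℤ) (hy1 : 0 < y.1) (hy2 : y.2 ≤ 0) :
    rker b12 b23 q y z = if z = ((0 : ℤ), y.2) then b12 else 0 := by
  unfold rker
  rw [if_congr (show (0 < y.1 ∧ y.2 ≤ 0 ∧ z = (0, y.2)) ↔ z = ((0 : ℤ), y.2) from
      ⟨fun h => h.2.2, fun h => ⟨hy1, hy2, h⟩⟩) rfl rfl,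
    if_neg (show ¬(y.1 < y.2 ∧ z = (y.1, y.1)) by rintro ⟨h, -⟩; omega),
    if_neg (show ¬(0 < y.2 ∧ y.2 ≤ y.1 ∧ z.1 = 0 ∧ 0 ≤ z.2 ∧ z.2 < y.2) by
      rintro ⟨h, -⟩; omega),
    if_neg (show ¬(0 < y.2 ∧ y.2 ≤ y.1 ∧ z = (0, y.2)) by rintro ⟨h, -⟩; omega),
    if_neg (show ¬(0 < y.1 ∧ y.1 < y.2 ∧ z.1 = 0 ∧ 0 ≤ z.2 ∧ z.2 ≤ y.1) by
      rintro ⟨h1, h2, -⟩; omega),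
    if_neg (show ¬(0 < y.1 ∧ y.1 < y.2 ∧ z = (0, y.2)) by rintro ⟨h1, h2, -⟩; omega)]
  ring

lemma rker_pospos (b12 b23 q : ℝ) (y z : ℤ × ℤ) (hy2 : 0 < y.2) :
    rker b12 b23 q y z
      = (if y.1 < y.2 ∧ z = (y.1, y.1) then b23 else 0) + rB b12 q y z := by
  unfold rker rB
  rw [if_neg (show ¬(0 < y.1 ∧ y.2 ≤ 0 ∧ z = (0, y.2)) by rintro ⟨h1, h2, -⟩; omega)]
  ring


section regions

variable {l1 l2 l3 b12 b23 q δ T : ℝ}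

lemma numR1a {l1 l2 l3 δ dp dm Pb1 oT : ℝ} (hl1 : 0 < l1) (hl2 : 0 < l2) (hl3 : 0 < l3)
    (hl2u : l2 ≤ 1) (hl3u : l3 ≤ 1) (hδpos : 0 < δ) (hδ2 : δ ≤ l2 - l1) (hδ3 : δ ≤ l3 - l1)
    (hdp : dp ≤ dm + oT) (hdm0 : 0 ≤ dm) (hdm1 : dm ≤ 1) (hP0 : 0 ≤ Pb1) (hP1 : Pb1 ≤ 1)
    (hoT0 : 0 ≤ oT) (hoT : oT ≤ δ / 4) (x4 : ℝ) :
    l2 * (-1 + dp) + l3 * (δ / 16 * Pb1 - dm) + l1 * 1 + 0 * x4 ≤ -(δ / 8) := by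
  have h1 : l2 * dp ≤ l2 * (dm + oT) := by nlinarith
  have hlp : l3 * Pb1 ≤ 1 := by nlinarith
  have h2 : l3 * (δ / 16 * Pb1) ≤ δ / 16 := by nlinarith [hlp]
  have h3 : l2 * oT ≤ δ / 4 := by nlinarith
  rcases le_total l2 l3 with h | h
  · have h4 : (l2 - l3) * dm ≤ 0 := mul_nonpos_iff.mpr (Or.inr ⟨by linarith, hdm0⟩)
    nlinarith
  · have h4 : (l2 - l3) * dm ≤ (l2 - l3) * 1 := by nlinarith
    nlinarith

lemma numR1b {l1 l2 l3 b23 δ u : ℝ} (hl1 : 0 < l1) (hl2 : 0 < l2) (hl3 : 0 < l3)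
    (hb23 : 0 < b23) (hl3u : l3 ≤ 1) (hδpos : 0 < δ) (hδ2 : δ ≤ l2 - l1) (hu : 1 ≤ u) :
    l2 * (-(δ / 16) - 1) + l3 * (δ / 16) + l1 * 1 + b23 * -(δ / 16 * u) ≤ -(δ / 8) := by
  have h1 : 0 ≤ b23 * (δ / 16 * u) := mul_nonneg hb23.le (mul_nonneg (by linarith) (by linarith))
  nlinarith

/-- Region a ≤ -1, b ≤ -1. -/
lemma regionR1 (hl1 : 0 < l1) (hl2 : 0 < l2) (hl3 : 0 < l3) (hb23 : 0 < b23)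
    (hl2u : l2 ≤ 1) (hl3u : l3 ≤ 1)
    (hδpos : 0 < δ) (hδ2 : δ ≤ l2 - l1) (hδ3 : δ ≤ l3 - l1)
    (hT1 : 1 ≤ T) (h1T : 1 / T ≤ δ / 4)
    (a b : ℤ) (ha : a ≤ -1) (hb : b ≤ -1) :
    ∑' z : ℤ × ℤ, (sker l1 l2 l3 (a, b) z + rker b12 b23 q (a, b) z)
      * (lyap (δ/2) (δ/16) (δ/16) T z - lyap (δ/2) (δ/16) (δ/16) T (a, b)) ≤ -(δ/8) := by
  set F := lyap (δ/2) (δ/16) (δ/16) T with hF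
  set g : ℤ × ℤ → ℝ := fun z => F z - F (a, b) with hg
  have e1 : ((a, b) : ℤ × ℤ) + (1, 0) = (a + 1, b) := by simp
  have e2 : ((a, b) : ℤ × ℤ) + (0, 1) = (a, b + 1) := by simp
  have e3 : ((a, b) : ℤ × ℤ) - (1, 1) = (a - 1, b - 1) := by simp [Prod.ext_iff]
  have hs : ∀ z, sker l1 l2 l3 (a, b) z
      = (if z = ((a + 1 : ℤ), b) then l2 else 0) + (if z = ((a : ℤ), b + 1) then l3 else 0)
        + (if z = ((a - 1 : ℤ), b - 1) then l1 else 0) := by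
    intro z; unfold sker; rw [e1, e2, e3]
  have hr : ∀ z, rker b12 b23 q (a, b) z = if a < b ∧ z = ((a : ℤ), (a : ℤ)) then b23 else 0 :=
    fun z => rker_of_nonpos b12 b23 q (a, b) z (show a ≤ 0 by omega)
  have hPa : P (-a) = -(a : ℝ) := by rw [P_of_nonneg (by omega)]; push_cast; ring
  have hPa1 : P (-(a + 1)) = -(a : ℝ) - 1 := by rw [P_of_nonneg (by omega)]; push_cast; ring
  have hPa2 : P (-(a - 1)) = -(a : ℝ) + 1 := by rw [P_of_nonneg (by omega)]; push_cast; ring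
  have hPb : P (-b) = -(b : ℝ) := by rw [P_of_nonneg (by omega)]; push_cast; ring
  have hPb1 : P (-(b + 1)) = -(b : ℝ) - 1 := by rw [P_of_nonneg (by omega)]; push_cast; ring
  have hPb2 : P (-(b - 1)) = -(b : ℝ) + 1 := by rw [P_of_nonneg (by omega)]; push_cast; ring
  have hPaz : P a = 0 := P_of_nonpos (by omega)
  have hPaz1 : P (a + 1) = 0 := P_of_nonpos (by omega)
  have hPaz2 : P (a - 1) = 0 := P_of_nonpos (by omega)
  have hPbz : P b = 0 := P_of_nonpos (by omega)
  have hPbz1 : P (b + 1) = 0 := P_of_nonpos (by omega)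
  have hPbz2 : P (b - 1) = 0 := P_of_nonpos (by omega)
  rcases le_or_gt b a with hab | hab
  · -- case b ≤ a
    have hk : ∀ z, (sker l1 l2 l3 (a, b) z + rker b12 b23 q (a, b) z) * g z
        = (if z = ((a + 1 : ℤ), b) then l2 else 0) * g z
          + (if z = ((a : ℤ), b + 1) then l3 else 0) * g z
          + (if z = ((a - 1 : ℤ), b - 1) then l1 else 0) * g z
          + (if z = ((0 : ℤ), (0 : ℤ)) then (0 : ℝ) else 0) * g z := by
      intro z
      rw [hs z, hr z, if_neg (show ¬(a < b ∧ z = ((a : ℤ), (a : ℤ))) from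
        fun h => absurd h.1 (by omega))]
      simp only [ite_self]
      ring
    obtain ⟨-, ht4⟩ := tsum_eval4 _ g _ _ _ _ l2 l3 l1 0 hk
    rw [ht4]
    have hPba : P (b - a) = 0 := P_of_nonpos (by omega)
    have hPba2 : P (b - 1 - (a - 1)) = 0 := P_of_nonpos (by omega)
    have hPba1 : P (b - (a + 1)) = 0 := P_of_nonpos (by omega)
    have harg0 : P (-b) - P (-a) = (a : ℝ) - (b : ℝ) := by rw [hPa, hPb]; ring
    have harg2 : P (-b) - P (-(a + 1)) = (a : ℝ) - (b : ℝ) + 1 := by rw [hPa1, hPb]; ring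
    have harg3 : P (-(b + 1)) - P (-a) = (a : ℝ) - (b : ℝ) - 1 := by rw [hPa, hPb1]; ring
    have harg1 : P (-(b - 1)) - P (-(a - 1)) = (a : ℝ) - (b : ℝ) := by rw [hPa2, hPb2]; ring
    set t : ℝ := (a : ℝ) - (b : ℝ) with hts
    have hgy : F (a, b) = (δ/16) * P (b - a) + -(a : ℝ) + phi T t := by
      rw [hF, lyap_eval, harg0, hPaz, hPbz, hPa]; ring
    have hg2 : g ((a + 1 : ℤ), b) = -1 + (phi T (t + 1) - phi T t) := by
      rw [hg]; dsimp only
      rw [hgy, hF, lyap_eval, harg2, hPaz1, hPbz, hPa1, hPba1, hPba]; ring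
    have hg3 : g ((a : ℤ), b + 1)
        = (δ/16) * P (b + 1 - a) - (phi T t - phi T (t - 1)) := by
      rw [hg]; dsimp only
      rw [hgy, hF, lyap_eval, harg3, hPaz, hPbz1, hPa, hPba]; ring
    have hg1 : g ((a - 1 : ℤ), b - 1) = 1 := by
      rw [hg]; dsimp only
      rw [hgy, hF, lyap_eval, harg1, hPaz2, hPbz2, hPa2, hPba2, hPba]; ring
    rw [hg2, hg3, hg1]
    have hsec := phi_secdiff hT1 t
    have hmono : phi T (t - 1) ≤ phi T t := phi_mono hT1 (by linarith)
    have hstep : phi T t ≤ phi T (t - 1) + 1 := by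
      have h := phi_step hT1 (t - 1)
      rwa [show t - 1 + 1 = t by ring] at h
    have hTpos : (0:ℝ) < T := by linarith
    exact numR1a hl1 hl2 hl3 hl2u hl3u hδpos hδ2 hδ3 (by linarith) (by linarith) (by linarith)
      (P_nonneg _) (P_le_one (by omega)) (by positivity) h1T _
  · -- case a < b
    have hk : ∀ z, (sker l1 l2 l3 (a, b) z + rker b12 b23 q (a, b) z) * g z
        = (if z = ((a + 1 : ℤ), b) then l2 else 0) * g z
          + (if z = ((a : ℤ), b + 1) then l3 else 0) * g z
          + (if z = ((a - 1 : ℤ), b - 1) then l1 else 0) * g z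
          + (if z = ((a : ℤ), (a : ℤ)) then b23 else 0) * g z := by
      intro z
      rw [hs z, hr z, if_congr (and_iff_right hab) rfl rfl]
      ring
    obtain ⟨-, ht4⟩ := tsum_eval4 _ g _ _ _ _ l2 l3 l1 b23 hk
    rw [ht4]
    have hPba : P (b - a) = (b : ℝ) - (a : ℝ) := by
      rw [P_of_nonneg (by omega)]; push_cast; ring
    have hPba2 : P (b - 1 - (a - 1)) = (b : ℝ) - (a : ℝ) := by
      rw [P_of_nonneg (by omega)]; push_cast; ring
    have hPba1 : P (b - (a + 1)) = (b : ℝ) - (a : ℝ) - 1 := by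
      rw [P_of_nonneg (by omega)]; push_cast; ring
    have hPba3 : P (b + 1 - a) = (b : ℝ) - (a : ℝ) + 1 := by
      rw [P_of_nonneg (by omega)]; push_cast; ring
    have hab' : (a : ℝ) + 1 ≤ (b : ℝ) := by push_cast; exact_mod_cast (by omega : a + 1 ≤ b)
    have harg0 : P (-b) - P (-a) = (a : ℝ) - (b : ℝ) := by rw [hPa, hPb]; ring
    have harg2 : P (-b) - P (-(a + 1)) = (a : ℝ) - (b : ℝ) + 1 := by rw [hPa1, hPb]; ring
    have harg3 : P (-(b + 1)) - P (-a) = (a : ℝ) - (b : ℝ) - 1 := by rw [hPa, hPb1]; ring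
    have harg1 : P (-(b - 1)) - P (-(a - 1)) = (a : ℝ) - (b : ℝ) := by rw [hPa2, hPb2]; ring
    have hgy : F (a, b) = (δ/16) * ((b : ℝ) - (a : ℝ)) + -(a : ℝ) := by
      rw [hF, lyap_eval, harg0, hPaz, hPbz, hPa, hPba, phi_of_nonpos (by linarith)]; ring
    have hg2 : g ((a + 1 : ℤ), b) = -(δ/16) - 1 := by
      rw [hg]; dsimp only
      rw [hgy, hF, lyap_eval, harg2, hPaz1, hPbz, hPa1, hPba1, phi_of_nonpos (by linarith)]; ring
    have hg3 : g ((a : ℤ), b + 1) = (δ/16) := by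
      rw [hg]; dsimp only
      rw [hgy, hF, lyap_eval, harg3, hPaz, hPbz1, hPa, hPba3, phi_of_nonpos (by linarith)]; ring
    have hg1 : g ((a - 1 : ℤ), b - 1) = 1 := by
      rw [hg]; dsimp only
      rw [hgy, hF, lyap_eval, harg1, hPaz2, hPbz2, hPa2, hPba2, phi_of_nonpos (by linarith)]; ring
    have hg4 : g ((a : ℤ), (a : ℤ)) = -(δ/16 * ((b : ℝ) - (a : ℝ))) := by
      rw [hg]; dsimp only
      rw [hgy, hF, lyap_eval]
      rw [show ((a : ℤ) - (a : ℤ)) = (0 : ℤ) by ring, show P (0 : ℤ) = 0 from P_of_nonpos le_rfl]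
      rw [show P (-a) - P (-a) = (0 : ℝ) by ring, phi_of_nonpos le_rfl, hPaz, hPa]; ring
    rw [hg2, hg3, hg1, hg4]
    exact numR1b hl1 hl2 hl3 hb23 hl3u hδpos hδ2 (by linarith)

lemma numR2 {l1 l2 l3 b23 δ u : ℝ} (hl1 : 0 < l1) (hl2 : 0 < l2) (hl3 : 0 < l3)
    (hb23 : 0 < b23) (hl3u : l3 ≤ 1) (hδpos : 0 < δ) (hδ2 : δ ≤ l2 - l1) (hu : 1 ≤ u) :
    l2 * (-(δ / 16) - 1) + l3 * (δ / 8) + l1 * 1 + b23 * -(δ / 16 * u) ≤ -(δ / 8) := by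
  have h1 : 0 ≤ b23 * (δ / 16 * u) := mul_nonneg hb23.le (mul_nonneg (by linarith) (by linarith))
  nlinarith

/-- Region a ≤ -1, b = 0. -/
lemma regionR2 (hl1 : 0 < l1) (hl2 : 0 < l2) (hl3 : 0 < l3) (hb23 : 0 < b23)
    (hl2u : l2 ≤ 1) (hl3u : l3 ≤ 1)
    (hδpos : 0 < δ) (hδ2 : δ ≤ l2 - l1) (hδ3 : δ ≤ l3 - l1)
    (hT1 : 1 ≤ T)
    (a : ℤ) (ha : a ≤ -1) :
    ∑' z : ℤ × ℤ, (sker l1 l2 l3 (a, 0) z + rker b12 b23 q (a, 0) z)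
      * (lyap (δ/2) (δ/16) (δ/16) T z - lyap (δ/2) (δ/16) (δ/16) T (a, 0)) ≤ -(δ/8) := by
  set F := lyap (δ/2) (δ/16) (δ/16) T with hF
  set g : ℤ × ℤ → ℝ := fun z => F z - F (a, 0) with hg
  have e1 : ((a, 0) : ℤ × ℤ) + (1, 0) = (a + 1, 0) := by simp
  have e2 : ((a, 0) : ℤ × ℤ) + (0, 1) = (a, 1) := by simp
  have e3 : ((a, 0) : ℤ × ℤ) - (1, 1) = (a - 1, -1) := by simp [Prod.ext_iff]
  have hs : ∀ z, sker l1 l2 l3 (a, 0) z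
      = (if z = ((a + 1 : ℤ), (0 : ℤ)) then l2 else 0) + (if z = ((a : ℤ), (1 : ℤ)) then l3 else 0)
        + (if z = ((a - 1 : ℤ), (-1 : ℤ)) then l1 else 0) := by
    intro z; unfold sker; rw [e1, e2, e3]
  have hr : ∀ z, rker b12 b23 q (a, 0) z
      = if a < 0 ∧ z = ((a : ℤ), (a : ℤ)) then b23 else 0 :=
    fun z => rker_of_nonpos b12 b23 q (a, 0) z (show a ≤ 0 by omega)
  have hk : ∀ z, (sker l1 l2 l3 (a, 0) z + rker b12 b23 q (a, 0) z) * g z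
      = (if z = ((a + 1 : ℤ), (0 : ℤ)) then l2 else 0) * g z
        + (if z = ((a : ℤ), (1 : ℤ)) then l3 else 0) * g z
        + (if z = ((a - 1 : ℤ), (-1 : ℤ)) then l1 else 0) * g z
        + (if z = ((a : ℤ), (a : ℤ)) then b23 else 0) * g z := by
    intro z
    rw [hs z, hr z, if_congr (and_iff_right (show a < 0 by omega)) rfl rfl]
    ring
  obtain ⟨-, ht4⟩ := tsum_eval4 _ g _ _ _ _ l2 l3 l1 b23 hk
  rw [ht4]
  have hPa : P (-a) = -(a : ℝ) := by rw [P_of_nonneg (by omega)]; push_cast; ring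
  have hPa1 : P (-(a + 1)) = -(a : ℝ) - 1 := by rw [P_of_nonneg (by omega)]; push_cast; ring
  have hPa2 : P (-(a - 1)) = -(a : ℝ) + 1 := by rw [P_of_nonneg (by omega)]; push_cast; ring
  have hPaz : P a = 0 := P_of_nonpos (by omega)
  have hPaz1 : P (a + 1) = 0 := P_of_nonpos (by omega)
  have hPaz2 : P (a - 1) = 0 := P_of_nonpos (by omega)
  have hP0 : P (0 : ℤ) = 0 := P_of_nonpos le_rfl
  have hP1 : P (1 : ℤ) = 1 := by rw [P_of_nonneg (by omega)]; norm_num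
  have hPm1 : P (-1 : ℤ) = 0 := P_of_nonpos (by omega)
  have hPn0 : P (-(0 : ℤ)) = 0 := P_of_nonpos (by omega)
  have hPnm1 : P (-(-1 : ℤ)) = 1 := by rw [P_of_nonneg (by omega)]; norm_num
  have hPba : P (0 - a) = -(a : ℝ) := by rw [P_of_nonneg (by omega)]; push_cast; ring
  have hPba2 : P (1 - a) = -(a : ℝ) + 1 := by rw [P_of_nonneg (by omega)]; push_cast; ring
  have hPba1 : P (0 - (a + 1)) = -(a : ℝ) - 1 := by rw [P_of_nonneg (by omega)]; push_cast; ring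
  have hPba3 : P (-1 - (a - 1)) = -(a : ℝ) := by rw [P_of_nonneg (by omega)]; push_cast; ring
  have hPaa : P ((a : ℤ) - (a : ℤ)) = 0 := by
    rw [show (a : ℤ) - (a : ℤ) = 0 by ring]; exact hP0
  have harg0 : P (-(0 : ℤ)) - P (-a) = (a : ℝ) := by rw [hPn0, hPa]; ring
  have harg2 : P (-(0 : ℤ)) - P (-(a + 1)) = (a : ℝ) + 1 := by rw [hPn0, hPa1]; ring
  have harg3 : P (-(1 : ℤ)) - P (-a) = (a : ℝ) := by rw [hPm1, hPa]; ring
  have harg1 : P (-(-1 : ℤ)) - P (-(a - 1)) = (a : ℝ) := by rw [hPnm1, hPa2]; ring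
  have harg4 : P (-a) - P (-a) = (0 : ℝ) := by ring
  have hA1 : (a : ℝ) ≤ -1 := by exact_mod_cast ha
  have hgy : F (a, 0) = (δ/16) * -(a : ℝ) + -(a : ℝ) := by
    rw [hF, lyap_eval, harg0, hPaz, hP0, hPa, hPba, phi_of_nonpos (by linarith)]; ring
  have hg2 : g ((a + 1 : ℤ), (0 : ℤ)) = -(δ/16) - 1 := by
    rw [hg]; dsimp only
    rw [hgy, hF, lyap_eval, harg2, hPaz1, hP0, hPa1, hPba1, phi_of_nonpos (by linarith)]; ring
  have hg3 : g ((a : ℤ), (1 : ℤ)) = δ/8 := by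
    rw [hg]; dsimp only
    rw [hgy, hF, lyap_eval, harg3, hPaz, hP1, hPa, hPba2, phi_of_nonpos (by linarith)]; ring
  have hg1 : g ((a - 1 : ℤ), (-1 : ℤ)) = 1 := by
    rw [hg]; dsimp only
    rw [hgy, hF, lyap_eval, harg1, hPaz2, hPm1, hPa2, hPba3, phi_of_nonpos (by linarith)]; ring
  have hg4 : g ((a : ℤ), (a : ℤ)) = -(δ/16 * -(a : ℝ)) := by
    rw [hg]; dsimp only
    rw [hgy, hF, lyap_eval, harg4, hPaz, hPaa, hPa, phi_of_nonpos le_rfl]; ring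
  rw [hg2, hg3, hg1, hg4]
  exact numR2 hl1 hl2 hl3 hb23 hl3u hδpos hδ2 (by linarith)

lemma numR3 {l1 l2 l3 b23 δ u : ℝ} (hl1 : 0 < l1) (hl2 : 0 < l2) (hl3 : 0 < l3)
    (hb23 : 0 < b23) (hl3u : l3 ≤ 1) (hδpos : 0 < δ) (hδ2 : δ ≤ l2 - l1) (hu : 0 ≤ u) :
    l2 * (-(δ / 16) - 1) + l3 * (δ / 8) + l1 * (-(δ/16) + 1) + b23 * -u ≤ -(δ / 8) := by
  have h1 : 0 ≤ b23 * u := mul_nonneg hb23.le hu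
  nlinarith

/-- Region a ≤ -1, b ≥ 1. -/
lemma regionR3 (hl1 : 0 < l1) (hl2 : 0 < l2) (hl3 : 0 < l3) (hb23 : 0 < b23)
    (hl2u : l2 ≤ 1) (hl3u : l3 ≤ 1)
    (hδpos : 0 < δ) (hδ2 : δ ≤ l2 - l1) (hδ3 : δ ≤ l3 - l1)
    (hT1 : 1 ≤ T)
    (a b : ℤ) (ha : a ≤ -1) (hb : 1 ≤ b) :
    ∑' z : ℤ × ℤ, (sker l1 l2 l3 (a, b) z + rker b12 b23 q (a, b) z)
      * (lyap (δ/2) (δ/16) (δ/16) T z - lyap (δ/2) (δ/16) (δ/16) T (a, b)) ≤ -(δ/8) := by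
  set F := lyap (δ/2) (δ/16) (δ/16) T with hF
  set g : ℤ × ℤ → ℝ := fun z => F z - F (a, b) with hg
  have e1 : ((a, b) : ℤ × ℤ) + (1, 0) = (a + 1, b) := by simp
  have e2 : ((a, b) : ℤ × ℤ) + (0, 1) = (a, b + 1) := by simp
  have e3 : ((a, b) : ℤ × ℤ) - (1, 1) = (a - 1, b - 1) := by simp [Prod.ext_iff]
  have hs : ∀ z, sker l1 l2 l3 (a, b) z
      = (if z = ((a + 1 : ℤ), b) then l2 else 0) + (if z = ((a : ℤ), b + 1) then l3 else 0)
        + (if z = ((a - 1 : ℤ), b - 1) then l1 else 0) := by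
    intro z; unfold sker; rw [e1, e2, e3]
  have hr : ∀ z, rker b12 b23 q (a, b) z = if a < b ∧ z = ((a : ℤ), (a : ℤ)) then b23 else 0 :=
    fun z => rker_of_nonpos b12 b23 q (a, b) z (show a ≤ 0 by omega)
  have hk : ∀ z, (sker l1 l2 l3 (a, b) z + rker b12 b23 q (a, b) z) * g z
      = (if z = ((a + 1 : ℤ), b) then l2 else 0) * g z
        + (if z = ((a : ℤ), b + 1) then l3 else 0) * g z
        + (if z = ((a - 1 : ℤ), b - 1) then l1 else 0) * g z
        + (if z = ((a : ℤ), (a : ℤ)) then b23 else 0) * g z := by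
    intro z
    rw [hs z, hr z, if_congr (and_iff_right (show a < b by omega)) rfl rfl]
    ring
  obtain ⟨-, ht4⟩ := tsum_eval4 _ g _ _ _ _ l2 l3 l1 b23 hk
  rw [ht4]
  have hPa : P (-a) = -(a : ℝ) := by rw [P_of_nonneg (by omega)]; push_cast; ring
  have hPa1 : P (-(a + 1)) = -(a : ℝ) - 1 := by rw [P_of_nonneg (by omega)]; push_cast; ring
  have hPa2 : P (-(a - 1)) = -(a : ℝ) + 1 := by rw [P_of_nonneg (by omega)]; push_cast; ring
  have hPaz : P a = 0 := P_of_nonpos (by omega)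
  have hPaz1 : P (a + 1) = 0 := P_of_nonpos (by omega)
  have hPaz2 : P (a - 1) = 0 := P_of_nonpos (by omega)
  have hPb : P b = (b : ℝ) := P_of_nonneg (by omega)
  have hPb1 : P (b + 1) = (b : ℝ) + 1 := by rw [P_of_nonneg (by omega)]; push_cast; ring
  have hPb2 : P (b - 1) = (b : ℝ) - 1 := by rw [P_of_nonneg (by omega)]; push_cast; ring
  have hPnb : P (-b) = 0 := P_of_nonpos (by omega)
  have hPnb1 : P (-(b + 1)) = 0 := P_of_nonpos (by omega)
  have hPnb2 : P (-(b - 1)) = 0 := P_of_nonpos (by omega)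
  have hPba : P (b - a) = (b : ℝ) - (a : ℝ) := by rw [P_of_nonneg (by omega)]; push_cast; ring
  have hPba1 : P (b - (a + 1)) = (b : ℝ) - (a : ℝ) - 1 := by
    rw [P_of_nonneg (by omega)]; push_cast; ring
  have hPba2 : P (b + 1 - a) = (b : ℝ) - (a : ℝ) + 1 := by
    rw [P_of_nonneg (by omega)]; push_cast; ring
  have hPba3 : P (b - 1 - (a - 1)) = (b : ℝ) - (a : ℝ) := by
    rw [P_of_nonneg (by omega)]; push_cast; ring
  have hPaa : P ((a : ℤ) - (a : ℤ)) = 0 := by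
    rw [show (a : ℤ) - (a : ℤ) = 0 by ring]; exact P_of_nonpos le_rfl
  have harg0 : P (-b) - P (-a) = (a : ℝ) := by rw [hPnb, hPa]; ring
  have harg2 : P (-b) - P (-(a + 1)) = (a : ℝ) + 1 := by rw [hPnb, hPa1]; ring
  have harg3 : P (-(b + 1)) - P (-a) = (a : ℝ) := by rw [hPnb1, hPa]; ring
  have harg1 : P (-(b - 1)) - P (-(a - 1)) = (a : ℝ) - 1 := by rw [hPnb2, hPa2]; ring
  have harg4 : P (-a) - P (-a) = (0 : ℝ) := by ring
  have hA1 : (a : ℝ) ≤ -1 := by exact_mod_cast ha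
  have hgy : F (a, b) = (δ/16) * (b : ℝ) + (δ/16) * ((b : ℝ) - (a : ℝ)) + -(a : ℝ) := by
    rw [hF, lyap_eval, harg0, hPaz, hPb, hPa, hPba, phi_of_nonpos (by linarith)]; ring
  have hg2 : g ((a + 1 : ℤ), b) = -(δ/16) - 1 := by
    rw [hg]; dsimp only
    rw [hgy, hF, lyap_eval, harg2, hPaz1, hPb, hPa1, hPba1, phi_of_nonpos (by linarith)]; ring
  have hg3 : g ((a : ℤ), b + 1) = δ/8 := by
    rw [hg]; dsimp only
    rw [hgy, hF, lyap_eval, harg3, hPaz, hPb1, hPa, hPba2, phi_of_nonpos (by linarith)]; ring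
  have hg1 : g ((a - 1 : ℤ), b - 1) = -(δ/16) + 1 := by
    rw [hg]; dsimp only
    rw [hgy, hF, lyap_eval, harg1, hPaz2, hPb2, hPa2, hPba3, phi_of_nonpos (by linarith)]; ring
  have hg4 : g ((a : ℤ), (a : ℤ))
      = -((δ/16) * (b : ℝ) + (δ/16) * ((b : ℝ) - (a : ℝ))) := by
    rw [hg]; dsimp only
    rw [hgy, hF, lyap_eval, harg4, hPaz, hPaa, hPa, phi_of_nonpos le_rfl]; ring
  rw [hg2, hg3, hg1, hg4]
  have hB1 : (1 : ℝ) ≤ (b : ℝ) := by exact_mod_cast hb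
  exact numR3 hl1 hl2 hl3 hb23 hl3u hδpos hδ2
    (by nlinarith)

/-- Region a = 0, b deeply negative. -/
lemma regionR4 (hl1 : 0 < l1) (hl2 : 0 < l2) (hl3 : 0 < l3)
    (hl2u : l2 ≤ 1)
    (hδpos : 0 < δ) (hδ3 : δ ≤ l3 - l1)
    (hT1 : 1 ≤ T)
    (b : ℤ) (hb : b ≤ -1) (hdeep : T + 1 ≤ -(b : ℝ)) :
    ∑' z : ℤ × ℤ, (sker l1 l2 l3 ((0 : ℤ), b) z + rker b12 b23 q ((0 : ℤ), b) z)
      * (lyap (δ/2) (δ/16) (δ/16) T z - lyap (δ/2) (δ/16) (δ/16) T ((0 : ℤ), b)) ≤ -(δ/8) := by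
  set F := lyap (δ/2) (δ/16) (δ/16) T with hF
  set g : ℤ × ℤ → ℝ := fun z => F z - F ((0 : ℤ), b) with hg
  have hb2 : b ≤ -2 := by
    have : (2 : ℝ) ≤ -(b : ℝ) := by linarith
    have : (b : ℝ) ≤ -2 := by linarith
    exact_mod_cast this
  have e1 : (((0 : ℤ), b) : ℤ × ℤ) + (1, 0) = (1, b) := by simp
  have e2 : (((0 : ℤ), b) : ℤ × ℤ) + (0, 1) = (0, b + 1) := by simp
  have e3 : (((0 : ℤ), b) : ℤ × ℤ) - (1, 1) = (-1, b - 1) := by simp [Prod.ext_iff]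
  have hs : ∀ z, sker l1 l2 l3 ((0 : ℤ), b) z
      = (if z = ((1 : ℤ), b) then l2 else 0) + (if z = ((0 : ℤ), b + 1) then l3 else 0)
        + (if z = ((-1 : ℤ), b - 1) then l1 else 0) := by
    intro z; unfold sker; rw [e1, e2, e3]
  have hr : ∀ z, rker b12 b23 q ((0 : ℤ), b) z
      = if (0 : ℤ) < b ∧ z = ((0 : ℤ), (0 : ℤ)) then b23 else 0 :=
    fun z => rker_of_nonpos b12 b23 q ((0 : ℤ), b) z le_rfl
  have hk : ∀ z, (sker l1 l2 l3 ((0 : ℤ), b) z + rker b12 b23 q ((0 : ℤ), b) z) * g z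
      = (if z = ((1 : ℤ), b) then l2 else 0) * g z
        + (if z = ((0 : ℤ), b + 1) then l3 else 0) * g z
        + (if z = ((-1 : ℤ), b - 1) then l1 else 0) * g z
        + (if z = ((0 : ℤ), (0 : ℤ)) then (0 : ℝ) else 0) * g z := by
    intro z
    rw [hs z, hr z, if_neg (show ¬((0 : ℤ) < b ∧ z = ((0 : ℤ), (0 : ℤ))) from
      fun h => absurd h.1 (by omega))]
    simp only [ite_self]
    ring
  obtain ⟨-, ht4⟩ := tsum_eval4 _ g _ _ _ _ l2 l3 l1 0 hk
  rw [ht4]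
  have hP0 : P (0 : ℤ) = 0 := P_of_nonpos le_rfl
  have hPn0 : P (-(0 : ℤ)) = 0 := P_of_nonpos (by omega)
  have hP1 : P (1 : ℤ) = 1 := by rw [P_of_nonneg (by omega)]; norm_num
  have hPm1 : P (-1 : ℤ) = 0 := P_of_nonpos (by omega)
  have hPn1 : P (-(1 : ℤ)) = 0 := P_of_nonpos (by omega)
  have hPnm1 : P (-(-1 : ℤ)) = 1 := by rw [P_of_nonneg (by omega)]; norm_num
  have hPb : P b = 0 := P_of_nonpos (by omega)
  have hPb1 : P (b + 1) = 0 := P_of_nonpos (by omega)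
  have hPb2 : P (b - 1) = 0 := P_of_nonpos (by omega)
  have hPnb : P (-b) = -(b : ℝ) := by rw [P_of_nonneg (by omega)]; push_cast; ring
  have hPnb1 : P (-(b + 1)) = -(b : ℝ) - 1 := by rw [P_of_nonneg (by omega)]; push_cast; ring
  have hPnb2 : P (-(b - 1)) = -(b : ℝ) + 1 := by rw [P_of_nonneg (by omega)]; push_cast; ring
  have hPba : P (b - 0) = 0 := P_of_nonpos (by omega)
  have hPba1 : P (b - 1) = 0 := P_of_nonpos (by omega)
  have hPba2 : P (b + 1 - 0) = 0 := P_of_nonpos (by omega)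
  have hPba3 : P (b - 1 - -1) = 0 := P_of_nonpos (by omega)
  have harg0 : P (-b) - P (-(0 : ℤ)) = -(b : ℝ) := by rw [hPnb, hPn0]; ring
  have harg2 : P (-b) - P (-(1 : ℤ)) = -(b : ℝ) := by rw [hPnb, hPn1]; ring
  have harg3 : P (-(b + 1)) - P (-(0 : ℤ)) = -(b : ℝ) - 1 := by rw [hPnb1, hPn0]; ring
  have harg1 : P (-(b - 1)) - P (-(-1 : ℤ)) = -(b : ℝ) := by rw [hPnb2, hPnm1]; ring
  have hgy : F ((0 : ℤ), b) = phi T (-(b : ℝ)) := by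
    rw [hF, lyap_eval, harg0, hP0, hPb, hPn0, hPba]; ring
  have hg2 : g ((1 : ℤ), b) = δ/2 := by
    rw [hg]; dsimp only
    rw [hgy, hF, lyap_eval, harg2, hP1, hPb, hPn1, hPba1]; ring
  have hg3 : g ((0 : ℤ), b + 1) = -1 := by
    rw [hg]; dsimp only
    rw [hgy, hF, lyap_eval, harg3, hP0, hPb1, hPn0, hPba2,
      show phi T (-(b : ℝ)) = phi T (-(b : ℝ) - 1) + 1 from phi_slope_one hT1 (by linarith)]
    ring
  have hg1 : g ((-1 : ℤ), b - 1) = 1 := by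
    rw [hg]; dsimp only
    rw [hgy, hF, lyap_eval, harg1, hPm1, hPb2, hPnm1, hPba3]; ring
  rw [hg2, hg3, hg1]
  have h1 : l2 * (δ/2) ≤ δ/2 := by nlinarith
  nlinarith

lemma numR5 {l1 l2 l3 b23 δ x : ℝ} (hl1 : 0 < l1) (hl2 : 0 < l2) (hl3 : 0 < l3)
    (hl1u : l1 ≤ 1) (hl2u : l2 ≤ 1) (hl3u : l3 ≤ 1) (hδpos : 0 < δ) (hδ1 : δ < 1)
    (hx : 3 ≤ b23 * x) :
    l2 * (δ/2 - δ/16) + l3 * (δ/8) + l1 * (-(δ/16) + 1) + b23 * -x ≤ -(δ/8) := by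
  nlinarith

/-- Region a = 0, b large positive. -/
lemma regionR5 (hl1 : 0 < l1) (hl2 : 0 < l2) (hl3 : 0 < l3) (hb23 : 0 < b23)
    (hl1u : l1 ≤ 1) (hl2u : l2 ≤ 1) (hl3u : l3 ≤ 1)
    (hδpos : 0 < δ) (hδ1 : δ < 1)
    (hT1 : 1 ≤ T)
    (b : ℤ) (hb : 1 ≤ b) (hbig : 3 ≤ b23 * (δ/8 * (b : ℝ))) :
    ∑' z : ℤ × ℤ, (sker l1 l2 l3 ((0 : ℤ), b) z + rker b12 b23 q ((0 : ℤ), b) z)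
      * (lyap (δ/2) (δ/16) (δ/16) T z - lyap (δ/2) (δ/16) (δ/16) T ((0 : ℤ), b)) ≤ -(δ/8) := by
  set F := lyap (δ/2) (δ/16) (δ/16) T with hF
  set g : ℤ × ℤ → ℝ := fun z => F z - F ((0 : ℤ), b) with hg
  have e1 : (((0 : ℤ), b) : ℤ × ℤ) + (1, 0) = (1, b) := by simp
  have e2 : (((0 : ℤ), b) : ℤ × ℤ) + (0, 1) = (0, b + 1) := by simp
  have e3 : (((0 : ℤ), b) : ℤ × ℤ) - (1, 1) = (-1, b - 1) := by simp [Prod.ext_iff]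
  have hs : ∀ z, sker l1 l2 l3 ((0 : ℤ), b) z
      = (if z = ((1 : ℤ), b) then l2 else 0) + (if z = ((0 : ℤ), b + 1) then l3 else 0)
        + (if z = ((-1 : ℤ), b - 1) then l1 else 0) := by
    intro z; unfold sker; rw [e1, e2, e3]
  have hr : ∀ z, rker b12 b23 q ((0 : ℤ), b) z
      = if (0 : ℤ) < b ∧ z = ((0 : ℤ), (0 : ℤ)) then b23 else 0 :=
    fun z => rker_of_nonpos b12 b23 q ((0 : ℤ), b) z le_rfl
  have hk : ∀ z, (sker l1 l2 l3 ((0 : ℤ), b) z + rker b12 b23 q ((0 : ℤ), b) z) * g z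
      = (if z = ((1 : ℤ), b) then l2 else 0) * g z
        + (if z = ((0 : ℤ), b + 1) then l3 else 0) * g z
        + (if z = ((-1 : ℤ), b - 1) then l1 else 0) * g z
        + (if z = ((0 : ℤ), (0 : ℤ)) then b23 else 0) * g z := by
    intro z
    rw [hs z, hr z, if_congr (and_iff_right (show (0 : ℤ) < b by omega)) rfl rfl]
    ring
  obtain ⟨-, ht4⟩ := tsum_eval4 _ g _ _ _ _ l2 l3 l1 b23 hk
  rw [ht4]
  have hP0 : P (0 : ℤ) = 0 := P_of_nonpos le_rfl
  have hPn0 : P (-(0 : ℤ)) = 0 := P_of_nonpos (by omega)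
  have hP1 : P (1 : ℤ) = 1 := by rw [P_of_nonneg (by omega)]; norm_num
  have hPm1 : P (-1 : ℤ) = 0 := P_of_nonpos (by omega)
  have hPn1 : P (-(1 : ℤ)) = 0 := P_of_nonpos (by omega)
  have hPnm1 : P (-(-1 : ℤ)) = 1 := by rw [P_of_nonneg (by omega)]; norm_num
  have hPb : P b = (b : ℝ) := P_of_nonneg (by omega)
  have hPb1 : P (b + 1) = (b : ℝ) + 1 := by rw [P_of_nonneg (by omega)]; push_cast; ring
  have hPb2 : P (b - 1) = (b : ℝ) - 1 := by rw [P_of_nonneg (by omega)]; push_cast; ring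
  have hPnb : P (-b) = 0 := P_of_nonpos (by omega)
  have hPnb1 : P (-(b + 1)) = 0 := P_of_nonpos (by omega)
  have hPnb2 : P (-(b - 1)) = 0 := P_of_nonpos (by omega)
  have hPba : P (b - 0) = (b : ℝ) := by rw [P_of_nonneg (by omega)]; push_cast; ring
  have hPba1 : P (b - 1) = (b : ℝ) - 1 := hPb2
  have hPba2 : P (b + 1 - 0) = (b : ℝ) + 1 := by rw [P_of_nonneg (by omega)]; push_cast; ring
  have hPba3 : P (b - 1 - -1) = (b : ℝ) := by rw [P_of_nonneg (by omega)]; push_cast; ring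
  have hPaa : P ((0 : ℤ) - (0 : ℤ)) = 0 := by norm_num [P_of_nonpos]
  have harg0 : P (-b) - P (-(0 : ℤ)) = (0 : ℝ) := by rw [hPnb, hPn0]; ring
  have harg2 : P (-b) - P (-(1 : ℤ)) = (0 : ℝ) := by rw [hPnb, hPn1]; ring
  have harg3 : P (-(b + 1)) - P (-(0 : ℤ)) = (0 : ℝ) := by rw [hPnb1, hPn0]; ring
  have harg1 : P (-(b - 1)) - P (-(-1 : ℤ)) = -1 := by rw [hPnb2, hPnm1]; ring
  have hgy : F ((0 : ℤ), b) = (δ/16) * (b : ℝ) + (δ/16) * (b : ℝ) := by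
    rw [hF, lyap_eval, harg0, hP0, hPb, hPn0, hPba, phi_of_nonpos le_rfl]; ring
  have hg2 : g ((1 : ℤ), b) = δ/2 - δ/16 := by
    rw [hg]; dsimp only
    rw [hgy, hF, lyap_eval, harg2, hP1, hPb, hPn1, hPba1, phi_of_nonpos le_rfl]; ring
  have hg3 : g ((0 : ℤ), b + 1) = δ/8 := by
    rw [hg]; dsimp only
    rw [hgy, hF, lyap_eval, harg3, hP0, hPb1, hPn0, hPba2, phi_of_nonpos le_rfl]; ring
  have hg1 : g ((-1 : ℤ), b - 1) = -(δ/16) + 1 := by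
    rw [hg]; dsimp only
    rw [hgy, hF, lyap_eval, harg1, hPm1, hPb2, hPnm1, hPba3, phi_of_nonpos (by norm_num)]; ring
  have hg4 : g ((0 : ℤ), (0 : ℤ)) = -(δ/8 * (b : ℝ)) := by
    rw [hg]; dsimp only
    rw [hgy, hF, lyap_eval, hP0, hPaa, hPn0, show (0:ℝ) - 0 = 0 by norm_num,
      phi_of_nonpos le_rfl]; ring
  rw [hg2, hg3, hg1, hg4]
  exact numR5 hl1 hl2 hl3 hl1u hl2u hl3u hδpos hδ1 hbig

lemma numR6 {l1 l2 l3 b12 δ m3 s x : ℝ} (hl1 : 0 < l1) (hl2 : 0 < l2) (hl3 : 0 < l3)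
    (hl1u : l1 ≤ 1) (hl2u : l2 ≤ 1) (hl3u : l3 ≤ 1)
    (hδpos : 0 < δ) (hδ1 : δ < 1) (hδ3 : δ ≤ l3 - l1)
    (hm30 : 0 ≤ m3) (hm31 : m3 ≤ 1) (hs0 : 0 ≤ s) (hs1 : s ≤ 1)
    (hx0 : 0 ≤ b12 * x)
    (hOR : m3 = 1 ∨ 3 ≤ b12 * x) :
    l2 * (δ/2) + l3 * -m3 + l1 * (-(δ/2) + s) + b12 * -x ≤ -(δ/8) := by
  have h2 : l2 * (δ/2) ≤ δ/2 := by nlinarith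
  rcases hOR with h | h
  · subst h
    have h3 : l1 * s ≤ l1 := by nlinarith
    have h4 : 0 ≤ l1 * (δ/2) := by positivity
    nlinarith
  · have h3 : l1 * s ≤ 1 := by nlinarith
    have h4 : 0 ≤ l1 * (δ/2) := by positivity
    have h5 : 0 ≤ l3 * m3 := by positivity
    nlinarith

/-- Region a ≥ 1, b ≤ -1 (either b deeply negative or a large). -/
lemma regionR6 (hl1 : 0 < l1) (hl2 : 0 < l2) (hl3 : 0 < l3) (hb12 : 0 < b12)
    (hl1u : l1 ≤ 1) (hl2u : l2 ≤ 1) (hl3u : l3 ≤ 1)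
    (hδpos : 0 < δ) (hδ1 : δ < 1) (hδ2 : δ ≤ l2 - l1) (hδ3 : δ ≤ l3 - l1)
    (hT1 : 1 ≤ T)
    (a b : ℤ) (ha : 1 ≤ a) (hb : b ≤ -1)
    (hOR : T + 1 ≤ -(b : ℝ) ∨ 3 ≤ b12 * (δ/2 * (a : ℝ))) :
    ∑' z : ℤ × ℤ, (sker l1 l2 l3 (a, b) z + rker b12 b23 q (a, b) z)
      * (lyap (δ/2) (δ/16) (δ/16) T z - lyap (δ/2) (δ/16) (δ/16) T (a, b)) ≤ -(δ/8) := by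
  set F := lyap (δ/2) (δ/16) (δ/16) T with hF
  set g : ℤ × ℤ → ℝ := fun z => F z - F (a, b) with hg
  have e1 : ((a, b) : ℤ × ℤ) + (1, 0) = (a + 1, b) := by simp
  have e2 : ((a, b) : ℤ × ℤ) + (0, 1) = (a, b + 1) := by simp
  have e3 : ((a, b) : ℤ × ℤ) - (1, 1) = (a - 1, b - 1) := by simp [Prod.ext_iff]
  have hs : ∀ z, sker l1 l2 l3 (a, b) z
      = (if z = ((a + 1 : ℤ), b) then l2 else 0) + (if z = ((a : ℤ), b + 1) then l3 else 0)
        + (if z = ((a - 1 : ℤ), b - 1) then l1 else 0) := by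
    intro z; unfold sker; rw [e1, e2, e3]
  have hr : ∀ z, rker b12 b23 q (a, b) z = if z = ((0 : ℤ), b) then b12 else 0 :=
    fun z => rker_posneg b12 b23 q (a, b) z (show 0 < a by omega) (show b ≤ 0 by omega)
  have hk : ∀ z, (sker l1 l2 l3 (a, b) z + rker b12 b23 q (a, b) z) * g z
      = (if z = ((a + 1 : ℤ), b) then l2 else 0) * g z
        + (if z = ((a : ℤ), b + 1) then l3 else 0) * g z
        + (if z = ((a - 1 : ℤ), b - 1) then l1 else 0) * g z
        + (if z = ((0 : ℤ), b) then b12 else 0) * g z := by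
    intro z; rw [hs z, hr z]; ring
  obtain ⟨-, ht4⟩ := tsum_eval4 _ g _ _ _ _ l2 l3 l1 b12 hk
  rw [ht4]
  have hPa : P a = (a : ℝ) := P_of_nonneg (by omega)
  have hPa1 : P (a + 1) = (a : ℝ) + 1 := by rw [P_of_nonneg (by omega)]; push_cast; ring
  have hPa2 : P (a - 1) = (a : ℝ) - 1 := by rw [P_of_nonneg (by omega)]; push_cast; ring
  have hPna : P (-a) = 0 := P_of_nonpos (by omega)
  have hPna1 : P (-(a + 1)) = 0 := P_of_nonpos (by omega)
  have hPna2 : P (-(a - 1)) = 0 := P_of_nonpos (by omega)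
  have hP0 : P (0 : ℤ) = 0 := P_of_nonpos le_rfl
  have hPn0 : P (-(0 : ℤ)) = 0 := P_of_nonpos (by omega)
  have hPb : P b = 0 := P_of_nonpos (by omega)
  have hPb1 : P (b + 1) = 0 := P_of_nonpos (by omega)
  have hPb2 : P (b - 1) = 0 := P_of_nonpos (by omega)
  have hPnb : P (-b) = -(b : ℝ) := by rw [P_of_nonneg (by omega)]; push_cast; ring
  have hPnb1 : P (-(b + 1)) = -(b : ℝ) - 1 := by rw [P_of_nonneg (by omega)]; push_cast; ring
  have hPnb2 : P (-(b - 1)) = -(b : ℝ) + 1 := by rw [P_of_nonneg (by omega)]; push_cast; ring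
  have hPba : P (b - a) = 0 := P_of_nonpos (by omega)
  have hPba1 : P (b - (a + 1)) = 0 := P_of_nonpos (by omega)
  have hPba2 : P (b + 1 - a) = 0 := P_of_nonpos (by omega)
  have hPba3 : P (b - 1 - (a - 1)) = 0 := P_of_nonpos (by omega)
  have hPba4 : P (b - 0) = 0 := P_of_nonpos (by omega)
  have harg0 : P (-b) - P (-a) = -(b : ℝ) := by rw [hPnb, hPna]; ring
  have harg2 : P (-b) - P (-(a + 1)) = -(b : ℝ) := by rw [hPnb, hPna1]; ring
  have harg3 : P (-(b + 1)) - P (-a) = -(b : ℝ) - 1 := by rw [hPnb1, hPna]; ring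
  have harg1 : P (-(b - 1)) - P (-(a - 1)) = -(b : ℝ) + 1 := by rw [hPnb2, hPna2]; ring
  have harg4 : P (-b) - P (-(0 : ℤ)) = -(b : ℝ) := by rw [hPnb, hPn0]; ring
  have hgy : F (a, b) = (δ/2) * (a : ℝ) + phi T (-(b : ℝ)) := by
    rw [hF, lyap_eval, harg0, hPa, hPb, hPna, hPba]; ring
  have hg2 : g ((a + 1 : ℤ), b) = δ/2 := by
    rw [hg]; dsimp only
    rw [hgy, hF, lyap_eval, harg2, hPa1, hPb, hPna1, hPba1]; ring
  have hg3 : g ((a : ℤ), b + 1) = -(phi T (-(b : ℝ)) - phi T (-(b : ℝ) - 1)) := by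
    rw [hg]; dsimp only
    rw [hgy, hF, lyap_eval, harg3, hPa, hPb1, hPna, hPba2]; ring
  have hg1 : g ((a - 1 : ℤ), b - 1)
      = -(δ/2) + (phi T (-(b : ℝ) + 1) - phi T (-(b : ℝ))) := by
    rw [hg]; dsimp only
    rw [hgy, hF, lyap_eval, harg1, hPa2, hPb2, hPna2, hPba3]; ring
  have hg4 : g ((0 : ℤ), b) = -(δ/2 * (a : ℝ)) := by
    rw [hg]; dsimp only
    rw [hgy, hF, lyap_eval, harg4, hP0, hPb, hPn0, hPba4]; ring
  rw [hg2, hg3, hg1, hg4]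
  have hA1 : (1 : ℝ) ≤ (a : ℝ) := by exact_mod_cast ha
  have hB1 : (1 : ℝ) ≤ -(b : ℝ) := by
    have : (b : ℝ) ≤ -1 := by exact_mod_cast hb
    linarith
  have hm30 : 0 ≤ phi T (-(b : ℝ)) - phi T (-(b : ℝ) - 1) := by
    have := phi_mono hT1 (show -(b : ℝ) - 1 ≤ -(b : ℝ) by linarith)
    linarith
  have hm31 : phi T (-(b : ℝ)) - phi T (-(b : ℝ) - 1) ≤ 1 := by
    have h := phi_step hT1 (-(b : ℝ) - 1)
    rw [show -(b : ℝ) - 1 + 1 = -(b : ℝ) by ring] at h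
    linarith
  have hs0 : 0 ≤ phi T (-(b : ℝ) + 1) - phi T (-(b : ℝ)) := by
    have := phi_mono hT1 (show -(b : ℝ) ≤ -(b : ℝ) + 1 by linarith)
    linarith
  have hs1 : phi T (-(b : ℝ) + 1) - phi T (-(b : ℝ)) ≤ 1 := by
    have h := phi_step hT1 (-(b : ℝ))
    rw [show -(b : ℝ) + 1 = -(b:ℝ) + 1 from rfl] at h
    linarith
  have hx0 : 0 ≤ b12 * (δ/2 * (a : ℝ)) :=
    mul_nonneg hb12.le (mul_nonneg (by linarith) (by linarith))
  refine numR6 hl1 hl2 hl3 hl1u hl2u hl3u hδpos hδ1 hδ3 hm30 hm31 hs0 hs1 hx0 ?_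
  rcases hOR with h | h
  · left
    have := phi_slope_one hT1 (show T + 1 ≤ -(b : ℝ) from h)
    linarith
  · right; exact h

lemma numR7 {l1 l2 l3 b12 δ p s x : ℝ} (hl1 : 0 < l1) (hl2 : 0 < l2) (hl3 : 0 < l3)
    (hl1u : l1 ≤ 1) (hl2u : l2 ≤ 1) (hl3u : l3 ≤ 1)
    (hδpos : 0 < δ) (hδ1 : δ < 1)
    (hp0 : 0 ≤ p) (hp1 : p ≤ 1) (hs0 : 0 ≤ s) (hs1 : s ≤ 1)
    (hx : 3 ≤ b12 * x) :
    l2 * (δ/2) + l3 * (δ/16 + δ/16 * p) + l1 * (-(δ/2) + s) + b12 * -x ≤ -(δ/8) := by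
  have h2 : l2 * (δ/2) ≤ δ/2 := by nlinarith
  have h3 : l1 * s ≤ 1 := by nlinarith
  have h4 : 0 ≤ l1 * (δ/2) := by positivity
  have h5 : δ/16 + δ/16 * p ≤ δ/8 := by nlinarith
  have h6 : l3 * (δ/16 + δ/16 * p) ≤ δ/8 := by nlinarith [mul_nonneg hl3.le (show (0:ℝ) ≤ δ/16 + δ/16 * p by nlinarith)]
  nlinarith

/-- Region a ≥ 1 large, b = 0. -/
lemma regionR7 (hl1 : 0 < l1) (hl2 : 0 < l2) (hl3 : 0 < l3) (hb12 : 0 < b12)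
    (hl1u : l1 ≤ 1) (hl2u : l2 ≤ 1) (hl3u : l3 ≤ 1)
    (hδpos : 0 < δ) (hδ1 : δ < 1)
    (hT1 : 1 ≤ T) (h1T : 1 / T ≤ δ / 4)
    (a : ℤ) (ha : 1 ≤ a) (hbig : 3 ≤ b12 * (δ/2 * (a : ℝ))) :
    ∑' z : ℤ × ℤ, (sker l1 l2 l3 (a, (0 : ℤ)) z + rker b12 b23 q (a, (0 : ℤ)) z)
      * (lyap (δ/2) (δ/16) (δ/16) T z - lyap (δ/2) (δ/16) (δ/16) T (a, (0 : ℤ))) ≤ -(δ/8) := by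
  set F := lyap (δ/2) (δ/16) (δ/16) T with hF
  set g : ℤ × ℤ → ℝ := fun z => F z - F (a, (0 : ℤ)) with hg
  have e1 : ((a, (0 : ℤ)) : ℤ × ℤ) + (1, 0) = (a + 1, 0) := by simp
  have e2 : ((a, (0 : ℤ)) : ℤ × ℤ) + (0, 1) = (a, 1) := by simp
  have e3 : ((a, (0 : ℤ)) : ℤ × ℤ) - (1, 1) = (a - 1, -1) := by simp [Prod.ext_iff]
  have hs : ∀ z, sker l1 l2 l3 (a, (0 : ℤ)) z
      = (if z = ((a + 1 : ℤ), (0 : ℤ)) then l2 else 0) + (if z = ((a : ℤ), (1 : ℤ)) then l3 else 0)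
        + (if z = ((a - 1 : ℤ), (-1 : ℤ)) then l1 else 0) := by
    intro z; unfold sker; rw [e1, e2, e3]
  have hr : ∀ z, rker b12 b23 q (a, (0 : ℤ)) z = if z = ((0 : ℤ), (0 : ℤ)) then b12 else 0 :=
    fun z => rker_posneg b12 b23 q (a, (0 : ℤ)) z (show 0 < a by omega) le_rfl
  have hk : ∀ z, (sker l1 l2 l3 (a, (0 : ℤ)) z + rker b12 b23 q (a, (0 : ℤ)) z) * g z
      = (if z = ((a + 1 : ℤ), (0 : ℤ)) then l2 else 0) * g z
        + (if z = ((a : ℤ), (1 : ℤ)) then l3 else 0) * g z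
        + (if z = ((a - 1 : ℤ), (-1 : ℤ)) then l1 else 0) * g z
        + (if z = ((0 : ℤ), (0 : ℤ)) then b12 else 0) * g z := by
    intro z; rw [hs z, hr z]; ring
  obtain ⟨-, ht4⟩ := tsum_eval4 _ g _ _ _ _ l2 l3 l1 b12 hk
  rw [ht4]
  have hPa : P a = (a : ℝ) := P_of_nonneg (by omega)
  have hPa1 : P (a + 1) = (a : ℝ) + 1 := by rw [P_of_nonneg (by omega)]; push_cast; ring
  have hPa2 : P (a - 1) = (a : ℝ) - 1 := by rw [P_of_nonneg (by omega)]; push_cast; ring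
  have hPna : P (-a) = 0 := P_of_nonpos (by omega)
  have hPna1 : P (-(a + 1)) = 0 := P_of_nonpos (by omega)
  have hPna2 : P (-(a - 1)) = 0 := P_of_nonpos (by omega)
  have hP0 : P (0 : ℤ) = 0 := P_of_nonpos le_rfl
  have hPn0 : P (-(0 : ℤ)) = 0 := P_of_nonpos (by omega)
  have hP1 : P (1 : ℤ) = 1 := by rw [P_of_nonneg (by omega)]; norm_num
  have hPm1 : P (-1 : ℤ) = 0 := P_of_nonpos (by omega)
  have hPn1 : P (-(1 : ℤ)) = 0 := P_of_nonpos (by omega)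
  have hPnm1 : P (-(-1 : ℤ)) = 1 := by rw [P_of_nonneg (by omega)]; norm_num
  have hPba : P (0 - a) = 0 := P_of_nonpos (by omega)
  have hPba1 : P (0 - (a + 1)) = 0 := P_of_nonpos (by omega)
  have hPba3 : P (-1 - (a - 1)) = 0 := P_of_nonpos (by omega)
  have hPba4 : P ((0 : ℤ) - (0 : ℤ)) = 0 := by norm_num [P_of_nonpos]
  have harg0 : P (-(0 : ℤ)) - P (-a) = (0 : ℝ) := by rw [hPn0, hPna]; ring
  have harg2 : P (-(0 : ℤ)) - P (-(a + 1)) = (0 : ℝ) := by rw [hPn0, hPna1]; ring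
  have harg3 : P (-(1 : ℤ)) - P (-a) = (0 : ℝ) := by rw [hPn1, hPna]; ring
  have harg1 : P (-(-1 : ℤ)) - P (-(a - 1)) = (1 : ℝ) := by rw [hPnm1, hPna2]; ring
  have harg4 : P (-(0 : ℤ)) - P (-(0 : ℤ)) = (0 : ℝ) := by rw [hPn0]; ring
  have hgy : F (a, (0 : ℤ)) = (δ/2) * (a : ℝ) := by
    rw [hF, lyap_eval, harg0, hPa, hP0, hPna, hPba, phi_of_nonpos le_rfl]; ring
  have hg2 : g ((a + 1 : ℤ), (0 : ℤ)) = δ/2 := by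
    rw [hg]; dsimp only
    rw [hgy, hF, lyap_eval, harg2, hPa1, hP0, hPna1, hPba1, phi_of_nonpos le_rfl]; ring
  have hg3 : g ((a : ℤ), (1 : ℤ)) = δ/16 + δ/16 * P (1 - a) := by
    rw [hg]; dsimp only
    rw [hgy, hF, lyap_eval, harg3, hPa, hP1, hPna, phi_of_nonpos le_rfl]; ring
  have hg1 : g ((a - 1 : ℤ), (-1 : ℤ)) = -(δ/2) + phi T 1 := by
    rw [hg]; dsimp only
    rw [hgy, hF, lyap_eval, harg1, hPa2, hPm1, hPna2, hPba3]; ring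
  have hg4 : g ((0 : ℤ), (0 : ℤ)) = -(δ/2 * (a : ℝ)) := by
    rw [hg]; dsimp only
    rw [hgy, hF, lyap_eval, harg4, hP0, hPn0, hPba4, phi_of_nonpos le_rfl]; ring
  rw [hg2, hg3, hg1, hg4]
  have hphi1a : 0 ≤ phi T 1 := phi_nonneg hT1 1
  have hphi1b : phi T 1 ≤ 1 := by
    have h := phi_step hT1 0
    rw [show (0 : ℝ) + 1 = 1 by norm_num, phi_of_nonpos le_rfl] at h
    linarith
  exact numR7 hl1 hl2 hl3 hl1u hl2u hl3u hδpos hδ1 (P_nonneg _) (P_le_one (by omega))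
    hphi1a hphi1b hbig

lemma rB_eq_zero (b12 q : ℝ) (y z : ℤ × ℤ) (hz : z ∉ bigSupp y) : rB b12 q y z = 0 := by
  simp only [bigSupp, Finset.mem_union, Finset.mem_insert, Finset.mem_singleton,
    Finset.mem_image, Finset.mem_Icc, not_or, not_exists] at hz
  obtain ⟨⟨h1, h2, h3, h4, h5⟩, h6⟩ := hz
  have hmax1 := le_max_left y.1 y.2
  have hmax2 := le_max_right y.1 y.2
  have hmem : ∀ j : ℤ, 0 ≤ j → j ≤ max y.1 y.2 → ((0 : ℤ), j) ≠ z := by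
    intro j hj1 hj2 hEq
    exact h6 j ⟨⟨hj1, hj2⟩, hEq⟩
  have hs3 : ¬(0 < y.2 ∧ y.2 ≤ y.1 ∧ z.1 = 0 ∧ 0 ≤ z.2 ∧ z.2 < y.2) := by
    rintro ⟨hc1, hc2, hc3, hc4, hc5⟩
    exact hmem z.2 hc4 (by omega) (by rw [← hc3])
  have hs5 : ¬(0 < y.1 ∧ y.1 < y.2 ∧ z.1 = 0 ∧ 0 ≤ z.2 ∧ z.2 ≤ y.1) := by
    rintro ⟨hc1, hc2, hc3, hc4, hc5⟩
    exact hmem z.2 hc4 (by omega) (by rw [← hc3])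
  unfold rB
  rw [if_neg hs3, if_neg (fun h => h4 h.2.2), if_neg hs5, if_neg (fun h => h4 h.2.2)]
  ring

lemma rB_bound (b12 q : ℝ) (hb12 : 0 < b12) (hq0 : 0 < q) (hq1 : q ≤ 1)
    (F : ℤ × ℤ → ℝ) (a b : ℤ) (ha : 1 ≤ a) (hb : 1 ≤ b) (M : ℝ)
    (hM0 : 0 ≤ M) (hMF : M ≤ F (a, b))
    (hFz : ∀ j : ℤ, 0 ≤ j → j ≤ b → F ((0 : ℤ), j) ≤ M) :
    ∀ z, rB b12 q (a, b) z * (F z - F (a, b))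
      ≤ if z = ((0 : ℤ), (0 : ℤ)) then b12 * q * (M - F (a, b)) else 0 := by
  have h1q : (0 : ℝ) ≤ 1 - q := by linarith
  intro z
  by_cases hz : z = ((0 : ℤ), (0 : ℤ))
  · subst hz
    rw [if_pos rfl]
    have hF00 := hFz 0 le_rfl (by omega)
    have hbq := (mul_pos hb12 hq0).le
    rcases le_or_gt b a with h | h
    · have e : rB b12 q (a, b) ((0 : ℤ), (0 : ℤ)) = b12 * q := by
        unfold rB
        rw [if_pos (show (0:ℤ) < b ∧ b ≤ a ∧ ((0:ℤ),(0:ℤ)).1 = 0 ∧ (0:ℤ) ≤ ((0:ℤ),(0:ℤ)).2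
              ∧ ((0:ℤ),(0:ℤ)).2 < b from ⟨by omega, h, rfl, le_rfl, by omega⟩),
          if_neg (show ¬((0:ℤ) < b ∧ b ≤ a ∧ ((0:ℤ),(0:ℤ)) = ((0:ℤ), b)) by
            rintro ⟨h1, h2, h3⟩; rw [Prod.mk.injEq] at h3; omega),
          if_neg (show ¬((0:ℤ) < a ∧ a < b ∧ ((0:ℤ),(0:ℤ)).1 = 0 ∧ (0:ℤ) ≤ ((0:ℤ),(0:ℤ)).2
              ∧ ((0:ℤ),(0:ℤ)).2 ≤ a) by rintro ⟨h1, h2, -⟩; omega),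
          if_neg (show ¬((0:ℤ) < a ∧ a < b ∧ ((0:ℤ),(0:ℤ)) = ((0:ℤ), b)) by
            rintro ⟨h1, h2, -⟩; omega)]
        norm_num
      rw [e]
      nlinarith
    · have e : rB b12 q (a, b) ((0 : ℤ), (0 : ℤ)) = b12 * q := by
        unfold rB
        rw [if_neg (show ¬((0:ℤ) < b ∧ b ≤ a ∧ ((0:ℤ),(0:ℤ)).1 = 0 ∧ (0:ℤ) ≤ ((0:ℤ),(0:ℤ)).2
              ∧ ((0:ℤ),(0:ℤ)).2 < b) by rintro ⟨h1, h2, -⟩; omega),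
          if_neg (show ¬((0:ℤ) < b ∧ b ≤ a ∧ ((0:ℤ),(0:ℤ)) = ((0:ℤ), b)) by
            rintro ⟨h1, h2, -⟩; omega),
          if_pos (show (0:ℤ) < a ∧ a < b ∧ ((0:ℤ),(0:ℤ)).1 = 0 ∧ (0:ℤ) ≤ ((0:ℤ),(0:ℤ)).2
              ∧ ((0:ℤ),(0:ℤ)).2 ≤ a from ⟨by omega, h, rfl, le_rfl, by omega⟩),
          if_neg (show ¬((0:ℤ) < a ∧ a < b ∧ ((0:ℤ),(0:ℤ)) = ((0:ℤ), b)) by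
            rintro ⟨h1, h2, h3⟩; rw [Prod.mk.injEq] at h3; omega)]
        norm_num
      rw [e]
      nlinarith
  · rw [if_neg hz]
    have key : ∀ (C : Prop) (_ : Decidable C) (c : ℝ), 0 ≤ c →
        (C → z.1 = 0 ∧ 0 ≤ z.2 ∧ z.2 ≤ b) →
        (if C then c else 0) * (F z - F (a, b)) ≤ 0 := by
      intro C inst c hc hC
      split_ifs with h
      · obtain ⟨h1, h2, h3⟩ := hC h
        have hzz : z = ((0 : ℤ), z.2) := by rw [← h1]
        have hd : F z ≤ M := by rw [hzz]; exact hFz z.2 h2 h3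
        exact mul_nonpos_iff.mpr (Or.inl ⟨hc, by linarith⟩)
      · rw [zero_mul]
    have e : rB b12 q (a, b) z * (F z - F (a, b))
        = (if (0:ℤ) < b ∧ b ≤ a ∧ z.1 = 0 ∧ 0 ≤ z.2 ∧ z.2 < b then
              b12 * (1 - q) ^ z.2.toNat * q else 0) * (F z - F (a, b))
          + (if (0:ℤ) < b ∧ b ≤ a ∧ z = ((0:ℤ), b) then b12 * (1 - q) ^ b.toNat else 0)
              * (F z - F (a, b))
          + (if (0:ℤ) < a ∧ a < b ∧ z.1 = 0 ∧ 0 ≤ z.2 ∧ z.2 ≤ a then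
              b12 * (1 - q) ^ z.2.toNat * q else 0) * (F z - F (a, b))
          + (if (0:ℤ) < a ∧ a < b ∧ z = ((0:ℤ), b) then b12 * (1 - q) ^ (a.toNat + 1) else 0)
              * (F z - F (a, b)) := by
      unfold rB; ring
    rw [e]
    have k3 : (if (0:ℤ) < b ∧ b ≤ a ∧ z.1 = 0 ∧ 0 ≤ z.2 ∧ z.2 < b then
          b12 * (1 - q) ^ z.2.toNat * q else 0) * (F z - F (a, b)) ≤ 0 :=
      key _ _ (b12 * (1 - q) ^ z.2.toNat * q)
      (mul_nonneg (mul_nonneg hb12.le (pow_nonneg h1q _)) hq0.le)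
      (by rintro ⟨h1, h2, h3, h4, h5⟩; exact ⟨h3, h4, by omega⟩)
    have k4 : (if (0:ℤ) < b ∧ b ≤ a ∧ z = ((0:ℤ), b) then
          b12 * (1 - q) ^ b.toNat else 0) * (F z - F (a, b)) ≤ 0 :=
      key _ _ (b12 * (1 - q) ^ b.toNat)
      (mul_nonneg hb12.le (pow_nonneg h1q _))
      (by rintro ⟨h1, h2, h3⟩
          refine ⟨by rw [h3], ?_, ?_⟩
          · rw [h3]; exact (by omega : (0:ℤ) ≤ b)
          · rw [h3])
    have k5 : (if (0:ℤ) < a ∧ a < b ∧ z.1 = 0 ∧ 0 ≤ z.2 ∧ z.2 ≤ a then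
          b12 * (1 - q) ^ z.2.toNat * q else 0) * (F z - F (a, b)) ≤ 0 :=
      key _ _ (b12 * (1 - q) ^ z.2.toNat * q)
      (mul_nonneg (mul_nonneg hb12.le (pow_nonneg h1q _)) hq0.le)
      (by rintro ⟨h1, h2, h3, h4, h5⟩; exact ⟨h3, h4, by omega⟩)
    have k6 : (if (0:ℤ) < a ∧ a < b ∧ z = ((0:ℤ), b) then
          b12 * (1 - q) ^ (a.toNat + 1) else 0) * (F z - F (a, b)) ≤ 0 :=
      key _ _ (b12 * (1 - q) ^ (a.toNat + 1))
      (mul_nonneg hb12.le (pow_nonneg h1q _))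
      (by rintro ⟨h1, h2, h3⟩
          refine ⟨by rw [h3], ?_, ?_⟩
          · rw [h3]; exact (by omega : (0:ℤ) ≤ b)
          · rw [h3])
    linarith

lemma numR8 {l1 l2 l3 δ d2 d3 r23x vv : ℝ} (hl1 : 0 < l1) (hl2 : 0 < l2) (hl3 : 0 < l3)
    (hl1u : l1 ≤ 1) (hl2u : l2 ≤ 1) (hl3u : l3 ≤ 1)
    (hδpos : 0 < δ) (hδ1 : δ < 1)
    (hd2 : d2 ≤ 0) (hd2' : -1 ≤ d2) (hd3 : 0 ≤ d3) (hd3' : d3 ≤ 1)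
    (hOR : (vv ≤ 0 ∧ r23x ≤ -3) ∨ (vv ≤ -3 ∧ r23x ≤ 0)) :
    l2 * (δ/2 + δ/16 * d2) + l3 * (δ/16 + δ/16 * d3) + l1 * (-(δ/2) - δ/16)
      + r23x + vv ≤ -(δ/8) := by
  have hd16 : (0:ℝ) ≤ δ/16 := by linarith
  have hm2 := mul_le_mul_of_nonneg_left hd2' hd16
  have hm2' : δ/16 * d2 ≤ 0 := mul_nonpos_iff.mpr (Or.inl ⟨hd16, hd2⟩)
  have hX0 : 0 ≤ δ/2 + δ/16 * d2 := by linarith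
  have hX1 : δ/2 + δ/16 * d2 ≤ δ/2 := by linarith
  have h2 : l2 * (δ/2 + δ/16 * d2) ≤ δ/2 := by
    calc l2 * (δ/2 + δ/16 * d2) ≤ 1 * (δ/2 + δ/16 * d2) :=
          mul_le_mul_of_nonneg_right hl2u hX0
      _ = δ/2 + δ/16 * d2 := one_mul _
      _ ≤ δ/2 := hX1
  have hm3 : 0 ≤ δ/16 * d3 := mul_nonneg hd16 hd3
  have hm3' := mul_le_mul_of_nonneg_left hd3' hd16
  have hY0 : 0 ≤ δ/16 + δ/16 * d3 := by linarith
  have hY1 : δ/16 + δ/16 * d3 ≤ δ/8 := by linarith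
  have h3 : l3 * (δ/16 + δ/16 * d3) ≤ δ/8 := by
    calc l3 * (δ/16 + δ/16 * d3) ≤ 1 * (δ/16 + δ/16 * d3) :=
          mul_le_mul_of_nonneg_right hl3u hY0
      _ = δ/16 + δ/16 * d3 := one_mul _
      _ ≤ δ/8 := hY1
  have h4 : l1 * (-(δ/2) - δ/16) ≤ 0 :=
    mul_nonpos_iff.mpr (Or.inl ⟨hl1.le, by linarith⟩)
  rcases hOR with ⟨h5, h6⟩ | ⟨h5, h6⟩ <;> linarith

set_option maxHeartbeats 1600000 in
/-- Region a ≥ 1, b ≥ 1 (either a large, or a < b with gap large). -/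
lemma regionR8 (hl1 : 0 < l1) (hl2 : 0 < l2) (hl3 : 0 < l3) (hb12 : 0 < b12) (hb23 : 0 < b23)
    (hl1u : l1 ≤ 1) (hl2u : l2 ≤ 1) (hl3u : l3 ≤ 1)
    (hq0 : 0 < q) (hq1 : q ≤ 1)
    (hδpos : 0 < δ) (hδ1 : δ < 1)
    (hT1 : 1 ≤ T)
    (a b : ℤ) (ha : 1 ≤ a) (hb : 1 ≤ b)
    (hOR : 3 ≤ b12 * q * (7 * δ / 16 * (a : ℝ))
      ∨ (a < b ∧ 3 ≤ b23 * (δ / 8 * ((b : ℝ) - (a : ℝ))))) :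
    ∑' z : ℤ × ℤ, (sker l1 l2 l3 (a, b) z + rker b12 b23 q (a, b) z)
      * (lyap (δ/2) (δ/16) (δ/16) T z - lyap (δ/2) (δ/16) (δ/16) T (a, b)) ≤ -(δ/8) := by
  set F := lyap (δ/2) (δ/16) (δ/16) T with hF
  set g : ℤ × ℤ → ℝ := fun z => F z - F (a, b) with hg
  have e1 : ((a, b) : ℤ × ℤ) + (1, 0) = (a + 1, b) := by simp
  have e2 : ((a, b) : ℤ × ℤ) + (0, 1) = (a, b + 1) := by simp
  have e3 : ((a, b) : ℤ × ℤ) - (1, 1) = (a - 1, b - 1) := by simp [Prod.ext_iff]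
  have hs : ∀ z, sker l1 l2 l3 (a, b) z
      = (if z = ((a + 1 : ℤ), b) then l2 else 0) + (if z = ((a : ℤ), b + 1) then l3 else 0)
        + (if z = ((a - 1 : ℤ), b - 1) then l1 else 0) := by
    intro z; unfold sker; rw [e1, e2, e3]
  have hrk : ∀ z, rker b12 b23 q (a, b) z
      = (if a < b ∧ z = ((a : ℤ), (a : ℤ)) then b23 else 0) + rB b12 q (a, b) z :=
    fun z => rker_pospos b12 b23 q (a, b) z (show 0 < b by omega)
  -- P evaluations
  have hPa : P a = (a : ℝ) := P_of_nonneg (by omega)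
  have hPa1 : P (a + 1) = (a : ℝ) + 1 := by rw [P_of_nonneg (by omega)]; push_cast; ring
  have hPa2 : P (a - 1) = (a : ℝ) - 1 := by rw [P_of_nonneg (by omega)]; push_cast; ring
  have hPna : P (-a) = 0 := P_of_nonpos (by omega)
  have hPna1 : P (-(a + 1)) = 0 := P_of_nonpos (by omega)
  have hPna2 : P (-(a - 1)) = 0 := P_of_nonpos (by omega)
  have hPb : P b = (b : ℝ) := P_of_nonneg (by omega)
  have hPb1 : P (b + 1) = (b : ℝ) + 1 := by rw [P_of_nonneg (by omega)]; push_cast; ring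
  have hPb2 : P (b - 1) = (b : ℝ) - 1 := by rw [P_of_nonneg (by omega)]; push_cast; ring
  have hPnb : P (-b) = 0 := P_of_nonpos (by omega)
  have hPnb1 : P (-(b + 1)) = 0 := P_of_nonpos (by omega)
  have hPnb2 : P (-(b - 1)) = 0 := P_of_nonpos (by omega)
  have harg0 : P (-b) - P (-a) = (0 : ℝ) := by rw [hPnb, hPna]; ring
  have harg2 : P (-b) - P (-(a + 1)) = (0 : ℝ) := by rw [hPnb, hPna1]; ring
  have harg3 : P (-(b + 1)) - P (-a) = (0 : ℝ) := by rw [hPnb1, hPna]; ring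
  have harg1 : P (-(b - 1)) - P (-(a - 1)) = (0 : ℝ) := by rw [hPnb2, hPna2]; ring
  have hA1 : (1 : ℝ) ≤ (a : ℝ) := by exact_mod_cast ha
  have hB1 : (1 : ℝ) ≤ (b : ℝ) := by exact_mod_cast hb
  have hgy : F (a, b) = (δ/2) * (a : ℝ) + (δ/16) * (b : ℝ) + (δ/16) * P (b - a) := by
    rw [hF, lyap_eval, harg0, hPa, hPb, hPna, phi_of_nonpos le_rfl]; ring
  have hg2 : g ((a + 1 : ℤ), b) = δ/2 + δ/16 * (P (b - (a + 1)) - P (b - a)) := by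
    rw [hg]; dsimp only
    rw [hgy, hF, lyap_eval, harg2, hPa1, hPb, hPna1, phi_of_nonpos le_rfl]; ring
  have hg3 : g ((a : ℤ), b + 1) = δ/16 + δ/16 * (P (b + 1 - a) - P (b - a)) := by
    rw [hg]; dsimp only
    rw [hgy, hF, lyap_eval, harg3, hPa, hPb1, hPna, phi_of_nonpos le_rfl]; ring
  have hg1 : g ((a - 1 : ℤ), b - 1) = -(δ/2) - δ/16 := by
    rw [hg]; dsimp only
    rw [hgy, hF, lyap_eval, harg1, hPa2, hPb2, hPna2, phi_of_nonpos le_rfl,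
      show b - 1 - (a - 1) = b - a by ring]; ring
  -- the strip bound
  set M : ℝ := δ/8 * (b : ℝ) with hM
  have hM0 : 0 ≤ M := by
    rw [hM]; exact mul_nonneg (by linarith) (by linarith)
  have hFz : ∀ j : ℤ, 0 ≤ j → j ≤ b → F ((0 : ℤ), j) ≤ M := by
    intro j hj1 hj2
    have hJ : (j : ℝ) ≤ (b : ℝ) := by exact_mod_cast hj2
    have hJ0 : (0 : ℝ) ≤ (j : ℝ) := by exact_mod_cast hj1
    have hFj : F ((0 : ℤ), j) = δ/8 * (j : ℝ) := by
      rw [hF, lyap_eval, show P (0 : ℤ) = 0 from P_of_nonpos le_rfl,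
        show P (-(0 : ℤ)) = 0 from P_of_nonpos (by omega),
        show (j : ℤ) - 0 = j by ring, P_of_nonneg hj1,
        show P (-j) = 0 from P_of_nonpos (by omega),
        show (0 : ℝ) - 0 = 0 by norm_num, phi_of_nonpos le_rfl]
      ring
    rw [hFj, hM]
    exact mul_le_mul_of_nonneg_left hJ (by linarith)
  have hPba0 : 0 ≤ P (b - a) := P_nonneg _
  have hgap : M + 7 * δ / 16 * (a : ℝ) ≤ F (a, b) := by
    rcases le_or_gt b a with h | h
    · have h0 : P (b - a) = 0 := P_of_nonpos (by omega)
      have hBA : (b : ℝ) ≤ (a : ℝ) := by exact_mod_cast h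
      rw [hgy, h0, hM]
      have hprod : 0 ≤ δ * ((a : ℝ) - (b : ℝ)) := mul_nonneg hδpos.le (by linarith)
      have e : δ/2 * (a:ℝ) + δ/16 * (b:ℝ) + δ/16 * 0 - (δ/8 * (b:ℝ) + 7 * δ / 16 * (a:ℝ))
          = (1/16) * (δ * ((a:ℝ) - (b:ℝ))) := by ring
      linarith [hprod, e.le, e.ge]
    · have h0 : P (b - a) = (b : ℝ) - (a : ℝ) := by
        rw [P_of_nonneg (by omega)]; push_cast; ring
      rw [hgy, h0, hM]; nlinarith
  have hMF : M ≤ F (a, b) := by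
    have h7 : 0 ≤ 7 * δ / 16 * (a : ℝ) := mul_nonneg (by linarith) (by linarith)
    linarith
  have hbq : (0 : ℝ) ≤ b12 * q := mul_nonneg hb12.le hq0.le
  have hv0 : b12 * q * (M - F (a, b)) ≤ 0 :=
    mul_nonpos_iff.mpr (Or.inl ⟨hbq, by linarith⟩)
  have hBsum : Summable (fun z => rB b12 q (a, b) z * g z) :=
    summable_of_ne_finset_zero (s := bigSupp (a, b))
      (fun z hz => by rw [rB_eq_zero b12 q (a, b) z hz, zero_mul])
  have hBle : ∀ z, rB b12 q (a, b) z * g z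
      ≤ if z = ((0 : ℤ), (0 : ℤ)) then b12 * q * (M - F (a, b)) else 0 :=
    rB_bound b12 q hb12 hq0 hq1 F a b ha hb M hM0 hMF hFz
  -- d2, d3 bounds
  have hd2a : P (b - (a + 1)) - P (b - a) ≤ 0 := by
    have := P_mono (show b - (a + 1) ≤ b - a by omega); linarith
  have hd2b : -1 ≤ P (b - (a + 1)) - P (b - a) := by
    have hstepP := P_step (b - a - 1)
    rw [show b - a - 1 + 1 = b - a by ring] at hstepP
    rw [show b - (a + 1) = b - a - 1 by ring]
    linarith
  have hd3a : 0 ≤ P (b + 1 - a) - P (b - a) := by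
    have := P_mono (show b - a ≤ b + 1 - a by omega); linarith
  have hd3b : P (b + 1 - a) - P (b - a) ≤ 1 := by
    have hstepP := P_step (b - a)
    rw [show b + 1 - a = b - a + 1 by ring]
    linarith
  rcases le_or_gt b a with hab | hab
  · -- b ≤ a : rollback r23 inactive, a must be large
    have hbig : 3 ≤ b12 * q * (7 * δ / 16 * (a : ℝ)) :=
      hOR.resolve_right (fun h => absurd h.1 (by omega))
    have hk5 : ∀ z, (sker l1 l2 l3 (a, b) z + rker b12 b23 q (a, b) z) * g z
        = (if z = ((a + 1 : ℤ), b) then l2 else 0) * g z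
          + (if z = ((a : ℤ), b + 1) then l3 else 0) * g z
          + (if z = ((a - 1 : ℤ), b - 1) then l1 else 0) * g z
          + (if z = ((0 : ℤ), (0 : ℤ)) then (0 : ℝ) else 0) * g z
          + rB b12 q (a, b) z * g z := by
      intro z
      rw [hs z, hrk z, if_neg (show ¬(a < b ∧ z = ((a : ℤ), (a : ℤ))) from
        fun h => absurd h.1 (by omega))]
      simp only [ite_self]
      ring
    obtain ⟨-, ht5⟩ := tsum_eval4B _ g (fun z => rB b12 q (a, b) z * g z)
      _ _ _ _ ((0 : ℤ), (0 : ℤ)) l2 l3 l1 0 (b12 * q * (M - F (a, b))) hk5 hBsum hBle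
    refine le_trans ht5 ?_
    rw [hg2, hg3, hg1, zero_mul]
    have hv3 : b12 * q * (M - F (a, b)) ≤ -3 := by
      have h' : M - F (a, b) ≤ -(7 * δ / 16 * (a : ℝ)) := by linarith
      have h2 := mul_le_mul_of_nonneg_left h' hbq
      have e : b12 * q * -(7 * δ / 16 * (a : ℝ)) = -(b12 * q * (7 * δ / 16 * (a : ℝ))) := by
        ring
      linarith [h2, e.le, e.ge]
    exact numR8 hl1 hl2 hl3 hl1u hl2u hl3u hδpos hδ1 hd2a hd2b hd3a hd3b
      (Or.inr ⟨hv3, le_rfl⟩)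
  · -- a < b : rollback r23 active
    have hk5 : ∀ z, (sker l1 l2 l3 (a, b) z + rker b12 b23 q (a, b) z) * g z
        = (if z = ((a + 1 : ℤ), b) then l2 else 0) * g z
          + (if z = ((a : ℤ), b + 1) then l3 else 0) * g z
          + (if z = ((a - 1 : ℤ), b - 1) then l1 else 0) * g z
          + (if z = ((a : ℤ), (a : ℤ)) then b23 else 0) * g z
          + rB b12 q (a, b) z * g z := by
      intro z
      rw [hs z, hrk z, if_congr (and_iff_right hab) rfl rfl]
      ring
    obtain ⟨-, ht5⟩ := tsum_eval4B _ g (fun z => rB b12 q (a, b) z * g z)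
      _ _ _ _ ((0 : ℤ), (0 : ℤ)) l2 l3 l1 b23 (b12 * q * (M - F (a, b))) hk5 hBsum hBle
    refine le_trans ht5 ?_
    have hPba : P (b - a) = (b : ℝ) - (a : ℝ) := by
      rw [P_of_nonneg (by omega)]; push_cast; ring
    have hg4 : g ((a : ℤ), (a : ℤ)) = -(δ/8 * ((b : ℝ) - (a : ℝ))) := by
      rw [hg]; dsimp only
      rw [hgy, hPba, hF, lyap_eval, show (a : ℤ) - a = 0 by ring,
        show P (0 : ℤ) = 0 from P_of_nonpos le_rfl, hPa, hPna,
        show (0 : ℝ) - 0 = 0 by norm_num, phi_of_nonpos le_rfl]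
      ring
    rw [hg2, hg3, hg1, hg4]
    have hBA0 : (0 : ℝ) ≤ (b : ℝ) - (a : ℝ) := by
      have : (a : ℝ) ≤ (b : ℝ) := by exact_mod_cast hab.le
      linarith
    have hr23neg : b23 * -(δ/8 * ((b : ℝ) - (a : ℝ))) ≤ 0 := by
      have : 0 ≤ b23 * (δ/8 * ((b : ℝ) - (a : ℝ))) :=
        mul_nonneg hb23.le (mul_nonneg (by linarith) hBA0)
      linarith [this, (show b23 * -(δ/8 * ((b : ℝ) - (a : ℝ)))
        = -(b23 * (δ/8 * ((b : ℝ) - (a : ℝ)))) by ring).le]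
    rcases hOR with hbig | ⟨-, hbig⟩
    · have hv3 : b12 * q * (M - F (a, b)) ≤ -3 := by
        have h' : M - F (a, b) ≤ -(7 * δ / 16 * (a : ℝ)) := by linarith
        have h2 := mul_le_mul_of_nonneg_left h' hbq
        have e : b12 * q * -(7 * δ / 16 * (a : ℝ)) = -(b12 * q * (7 * δ / 16 * (a : ℝ))) := by
          ring
        linarith [h2, e.le, e.ge]
      exact numR8 hl1 hl2 hl3 hl1u hl2u hl3u hδpos hδ1 hd2a hd2b hd3a hd3b
        (Or.inr ⟨hv3, hr23neg⟩)
    · have hr23big : b23 * -(δ/8 * ((b : ℝ) - (a : ℝ))) ≤ -3 := by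
        have e : b23 * -(δ/8 * ((b : ℝ) - (a : ℝ)))
            = -(b23 * (δ/8 * ((b : ℝ) - (a : ℝ)))) := by ring
        linarith [e.le, e.ge]
      exact numR8 hl1 hl2 hl3 hl1u hl2u hl3u hδpos hδ1 hd2a hd2b hd3a hd3b
        (Or.inl ⟨hv0, hr23big⟩)

end regions

end S15

open S15 in
set_option maxHeartbeats 1600000 in
/-- Foster–Lyapunov criterion holds: if `λ₁ < λ₂` and `λ₁ < λ₃`, then
there are a nonnegative function `f : ℤ² → ℝ`, a constant `ε > 0` and a finite set
`A ⊆ ℤ²` with `Σ_z p_{yz} f(z) − f(y) < −ε` for every `y ∉ A`, and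
`Σ_z p_{yz} f(z) < ∞` for every `y ∈ A`. -/
theorem stmt15 (l1 l2 l3 b12 b23 : ℝ)
    (hl1 : 0 < l1) (hl2 : 0 < l2) (hl3 : 0 < l3) (hb12 : 0 < b12) (hb23 : 0 < b23)
    (hsum : l1 + l2 + l3 + b12 + b23 = 1) (h12 : l1 < l2) (h13 : l1 < l3) :
    ∃ f : ℤ × ℤ → ℝ, (∀ y, 0 ≤ f y) ∧ ∃ ε > (0 : ℝ), ∃ A : Finset (ℤ × ℤ),
      (∀ y : ℤ × ℤ, y ∉ A →
        Summable (fun z : ℤ × ℤ => pker l1 l2 l3 b12 b23 (l2 / (l2 + b12)) y z * f z) ∧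
        (∑' z : ℤ × ℤ, pker l1 l2 l3 b12 b23 (l2 / (l2 + b12)) y z * f z) - f y < -ε) ∧
      (∀ y ∈ A,
        Summable (fun z : ℤ × ℤ => pker l1 l2 l3 b12 b23 (l2 / (l2 + b12)) y z * f z)) := by
  classical
  set q := l2 / (l2 + b12) with hqdef
  have hq0 : 0 < q := div_pos hl2 (by linarith)
  have hq1 : q ≤ 1 := by
    rw [hqdef, div_le_one (by linarith)]; linarith
  set δ := min (l2 - l1) (l3 - l1) with hδdef
  have hδ2 : δ ≤ l2 - l1 := min_le_left _ _
  have hδ3 : δ ≤ l3 - l1 := min_le_right _ _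
  have hδpos : 0 < δ := lt_min (by linarith) (by linarith)
  have hl1u : l1 ≤ 1 := by linarith
  have hl2u : l2 ≤ 1 := by linarith
  have hl3u : l3 ≤ 1 := by linarith
  have hδ1 : δ < 1 := lt_of_le_of_lt hδ2 (by linarith)
  set T := 4 / δ with hTdef
  have hTpos : 0 < T := div_pos (by norm_num) hδpos
  have hT1 : 1 ≤ T := by
    rw [hTdef, le_div_iff₀ hδpos]; linarith
  have h1T : 1 / T ≤ δ / 4 := by
    rw [hTdef, one_div_div]
  set F := lyap (δ/2) (δ/16) (δ/16) T with hFdef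
  -- thresholds
  have hbqδ : 0 < b12 * q * δ := mul_pos (mul_pos hb12 hq0) hδpos
  have hb23δ : 0 < b23 * δ := mul_pos hb23 hδpos
  have hb12δ : 0 < b12 * δ := mul_pos hb12 hδpos
  set d1 : ℝ := 7 / (b12 * q * δ) with hd1def
  set d2 : ℝ := 24 / (b23 * δ) with hd2def
  have hd1pos : 0 < d1 := div_pos (by norm_num) hbqδ
  have hd2pos : 0 < d2 := div_pos (by norm_num) hb23δ
  set X := T + d1 + d2 with hXdef
  set N : ℤ := ⌈X⌉ + 1 with hNdef
  have hNX : X + 1 ≤ (N : ℝ) := by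
    rw [hNdef]; push_cast; linarith [Int.le_ceil X]
  have hN1 : 1 ≤ N := by
    have : (1 : ℝ) ≤ (N : ℝ) := by linarith
    exact_mod_cast this
  -- key threshold implications
  have key23 : ∀ x : ℝ, d2 ≤ x → 3 ≤ b23 * (δ / 8 * x) := by
    intro x hx
    rw [hd2def, div_le_iff₀ hb23δ] at hx
    nlinarith
  have key12 : ∀ x : ℝ, 6 / (b12 * δ) ≤ x → 3 ≤ b12 * (δ / 2 * x) := by
    intro x hx
    rw [div_le_iff₀ hb12δ] at hx
    nlinarith
  have key12q : ∀ x : ℝ, d1 ≤ x → 3 ≤ b12 * q * (7 * δ / 16 * x) := by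
    intro x hx
    rw [hd1def, div_le_iff₀ hbqδ] at hx
    nlinarith
  have hd6 : 6 / (b12 * δ) ≤ d1 := by
    rw [hd1def, div_le_div_iff₀ hb12δ hbqδ]
    nlinarith [mul_nonneg (show (0:ℝ) ≤ 1 - q by linarith) hb12δ.le]
  refine ⟨F, fun y => lyap_nonneg (by linarith) (by linarith) (by linarith) hT1 y,
    δ/16, by linarith, Finset.Icc (-N, -N) (N, N), ?_, ?_⟩
  · rintro ⟨a, b⟩ hy
    obtain ⟨hsummable, hbridge⟩ := pker_bridge l1 l2 l3 b12 b23 q F (a, b)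
    refine ⟨hsummable, ?_⟩
    rw [hbridge]
    have hy4 : ¬(-N ≤ a ∧ -N ≤ b ∧ a ≤ N ∧ b ≤ N) := by
      rintro ⟨h1, h2, h3, h4⟩
      exact hy (Finset.mem_Icc.mpr ⟨Prod.mk_le_mk.mpr ⟨h1, h2⟩, Prod.mk_le_mk.mpr ⟨h3, h4⟩⟩)
    refine lt_of_le_of_lt ?_ (show -(δ/8) < -(δ/16) by linarith)
    rcases lt_trichotomy a 0 with ha | ha | ha
    · -- a ≤ -1
      rcases lt_trichotomy b 0 with hb | hb | hb
      · exact regionR1 hl1 hl2 hl3 hb23 hl2u hl3u hδpos hδ2 hδ3 hT1 h1T a b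
          (by omega) (by omega)
      · subst hb
        exact regionR2 hl1 hl2 hl3 hb23 hl2u hl3u hδpos hδ2 hδ3 hT1 a (by omega)
      · exact regionR3 hl1 hl2 hl3 hb23 hl2u hl3u hδpos hδ2 hδ3 hT1 a b
          (by omega) (by omega)
    · -- a = 0
      subst ha
      have hbout : b < -N ∨ N < b := by omega
      rcases hbout with hbo | hbo
      · -- deep negative
        have hcast : (b : ℝ) ≤ -((N : ℝ)) - 1 := by exact_mod_cast (by omega : b ≤ -N - 1)
        exact regionR4 hl1 hl2 hl3 hl2u hδpos hδ3 hT1 b (by omega)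
          (by linarith [hNX, hd1pos, hd2pos])
      · have hcast : (N : ℝ) + 1 ≤ (b : ℝ) := by exact_mod_cast (by omega : N + 1 ≤ b)
        exact regionR5 hl1 hl2 hl3 hb23 hl1u hl2u hl3u hδpos hδ1 hT1 b (by omega)
          (key23 _ (by linarith [hT1, hd1pos]))
    · -- a ≥ 1
      rcases lt_trichotomy b 0 with hb | hb | hb
      · have hout : N < a ∨ b < -N := by omega
        refine regionR6 hl1 hl2 hl3 hb12 hl1u hl2u hl3u hδpos hδ1 hδ2 hδ3 hT1 a b
          (by omega) (by omega) ?_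
        rcases hout with ho | ho
        · right
          have hcast : (N : ℝ) + 1 ≤ (a : ℝ) := by exact_mod_cast (by omega : N + 1 ≤ a)
          exact key12 _ (by linarith [hT1, hd2pos, hd6])
        · left
          have hcast : (b : ℝ) ≤ -((N : ℝ)) - 1 := by exact_mod_cast (by omega : b ≤ -N - 1)
          linarith [hNX, hd1pos, hd2pos]
      · subst hb
        have hout : N < a := by omega
        have hcast : (N : ℝ) + 1 ≤ (a : ℝ) := by exact_mod_cast (by omega : N + 1 ≤ a)
        exact regionR7 hl1 hl2 hl3 hb12 hl1u hl2u hl3u hδpos hδ1 hT1 h1T a (by omega)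
          (key12 _ (by linarith [hT1, hd2pos, hd6]))
      · refine regionR8 hl1 hl2 hl3 hb12 hb23 hl1u hl2u hl3u hq0 hq1 hδpos hδ1 hT1 a b
          (by omega) (by omega) ?_
        have hout : N < a ∨ N < b := by omega
        rcases hout with ho | ho
        · left
          have hcast : (N : ℝ) + 1 ≤ (a : ℝ) := by exact_mod_cast (by omega : N + 1 ≤ a)
          exact key12q _ (by linarith [hT1, hd2pos])
        · by_cases hcase : 3 ≤ b12 * q * (7 * δ / 16 * (a : ℝ))
          · exact Or.inl hcase
          · right
            have hAd1 : (a : ℝ) ≤ d1 := by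
              by_contra hA
              push_neg at hA
              exact hcase (key12q _ hA.le)
            have hcast : (N : ℝ) + 1 ≤ (b : ℝ) := by exact_mod_cast (by omega : N + 1 ≤ b)
            have hab : a < b := by
              have : (a : ℝ) < (b : ℝ) := by linarith [hT1, hd2pos]
              exact_mod_cast this
            exact ⟨hab, key23 _ (by linarith [hT1])⟩
  · intro y _
    exact (pker_bridge l1 l2 l3 b12 b23 q F y).1
end
end
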